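/- arXiv:2208.14255 — 3 statements merged into one kernel-verified Lean document; each statement's English description precedes it below -/
import Mathlib

section
/- Suppose $\alpha(u):=\#\{j: 1/p_j\le u\}$ is regularly varying at $\infty$ of order $\gamma\in(0,1)$. Then $\frac{1}{\alpha(n)}\sum_{j=1}^\infty \Pr(M_{n,j}\ge 1)=\frac{1}{\alpha(n)}\sum_{j=1}^\infty (1-e^{-np_j})\to\Gamma(1-\gamma)$ as $n\to\infty$. -/
open Filter Topology Real Set MeasureTheory
open scoped ENNReal NNReal

noncomputable section

/-- `α(u) = #{j : 1/p_j ≤ u}`, as a real number. -/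
def alpha0 (p : ℕ → ℝ) (u : ℝ) : ℝ := (Nat.card {j : ℕ | 1 / p j ≤ u} : ℝ)

/-- A function `α` is regularly varying at `∞` of order `γ` if `α(nu)/α(n) → u^γ` for all `u>0`. -/
def RegularlyVarying (α : ℝ → ℝ) (γ : ℝ) : Prop :=
  ∀ u : ℝ, 0 < u → Tendsto (fun n : ℕ => α ((n : ℝ) * u) / α (n : ℝ)) atTop (𝓝 (u ^ γ))

/-- `g_σ(m) = ∑_{l=1}^{m-1} 1/(l-σ)` (with `g_σ(0) = g_σ(1) = 0`). -/
def gfun (σ : ℝ) (m : ℕ) : ℝ := ∑ l ∈ Finset.Icc 1 (m - 1), (1 : ℝ) / ((l : ℝ) - σ)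

/-- Expectation of `g(M)` for `M ∼ Poisson(lam)`. -/
def Epois (lam : ℝ) (g : ℕ → ℝ) : ℝ :=
  ∑' m : ℕ, g m * (Real.exp (-lam) * lam ^ m / (Nat.factorial m : ℝ))

variable {p : ℕ → ℝ}

lemma fin_ge (hsum : Summable p) (c : ℝ) (hc : 0 < c) : {j : ℕ | c ≤ p j}.Finite := by
  have h0 : Tendsto p atTop (𝓝 0) := hsum.tendsto_atTop_zero
  have : ∀ᶠ j in atTop, p j < c := (h0.eventually_lt_const hc)
  obtain ⟨N, hN⟩ := eventually_atTop.1 this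
  exact (Set.finite_Iio N).subset (fun j hj => by
    by_contra h
    exact absurd (hN j (not_lt.1 h)) (not_lt.2 hj))

lemma fin_alpha (hp : ∀ j, 0 < p j) (hsum : Summable p) (u : ℝ) :
    {j : ℕ | 1 / p j ≤ u}.Finite := by
  rcases le_or_gt u 0 with hu | hu
  · convert Set.finite_empty
    ext j
    simp only [Set.mem_setOf_eq, Set.mem_empty_iff_false, iff_false, not_le]
    exact lt_of_le_of_lt hu (by have := hp j; positivity)
  · refine (fin_ge hsum (1/u) (by positivity)).subset fun j hj => ?_
    exact (one_div_le (hp j) hu).1 hj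

lemma fin_lt (hp : ∀ j, 0 < p j) (hsum : Summable p) (c t : ℝ) (ht : 0 < t) :
    {j : ℕ | t < c * p j}.Finite := by
  rcases le_or_gt c 0 with hc | hc
  · convert Set.finite_empty
    ext j
    simp only [Set.mem_setOf_eq, Set.mem_empty_iff_false, iff_false, not_lt]
    exact le_trans (mul_nonpos_of_nonpos_of_nonneg hc (hp j).le) ht.le
  · refine (fin_ge hsum (t/c) (by positivity)).subset fun j hj => ?_
    exact (div_le_iff₀' hc).2 (le_of_lt hj)

lemma alpha0_mono (hp : ∀ j, 0 < p j) (hsum : Summable p) : Monotone (alpha0 p) := by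
  intro u v huv
  unfold alpha0
  rw [Nat.card_coe_set_eq, Nat.card_coe_set_eq]
  exact_mod_cast Set.ncard_le_ncard (fun j hj => le_trans hj huv) (fin_alpha hp hsum v)

lemma alpha0_nonneg (u : ℝ) : 0 ≤ alpha0 p u := Nat.cast_nonneg _

lemma alpha0_pos (hp : ∀ j, 0 < p j) (hsum : Summable p) {u : ℝ} (hu : 1 / p 0 ≤ u) :
    1 ≤ alpha0 p u := by
  unfold alpha0
  rw [Nat.card_coe_set_eq]
  have : 0 < ({j : ℕ | 1 / p j ≤ u}).ncard :=
    (Set.ncard_pos (fin_alpha hp hsum u)).2 ⟨0, hu⟩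
  exact_mod_cast this

lemma card_le_alpha (hp : ∀ j, 0 < p j) (hsum : Summable p) (c t : ℝ) (ht : 0 < t)
    (hc : 0 ≤ c) :
    (Nat.card {j : ℕ | t < c * p j} : ℝ) ≤ alpha0 p (c * (1/t)) := by
  unfold alpha0
  rw [Nat.card_coe_set_eq, Nat.card_coe_set_eq]
  have hsub : {j : ℕ | t < c * p j} ⊆ {j : ℕ | 1 / p j ≤ c * (1/t)} := by
    intro j hj
    simp only [Set.mem_setOf_eq] at hj ⊢
    rw [div_le_iff₀ (hp j)]
    calc (1:ℝ) = t * (1/t) := by field_simp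
    _ ≤ (c * p j) * (1/t) := mul_le_mul_of_nonneg_right hj.le (by positivity)
    _ = c * (1/t) * p j := by ring
  exact_mod_cast Set.ncard_le_ncard hsub (fin_alpha hp hsum _)

lemma alpha_le_card (hp : ∀ j, 0 < p j) (hsum : Summable p) {c t s : ℝ} (ht : 0 < t)
    (hs0 : 0 < s) (hs : s * t < 1) (hc : 0 < c) :
    alpha0 p (c * s) ≤ (Nat.card {j : ℕ | t < c * p j} : ℝ) := by
  unfold alpha0
  rw [Nat.card_coe_set_eq, Nat.card_coe_set_eq]
  have hsub : {j : ℕ | 1 / p j ≤ c * s} ⊆ {j : ℕ | t < c * p j} := by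
    intro j hj
    simp only [Set.mem_setOf_eq] at hj ⊢
    have hpj := hp j
    rw [div_le_iff₀ hpj] at hj
    nlinarith
  exact_mod_cast Set.ncard_le_ncard hsub (fin_lt hp hsum c t ht)


/-- The ENNReal-valued counting function. -/
def Ncnt (p : ℕ → ℝ) (c : ℝ) (t : ℝ) : ℝ≥0∞ :=
  ∑' j : ℕ, (Set.Iio (c * p j)).indicator (fun _ => (1 : ℝ≥0∞)) t

lemma Ncnt_measurable (c : ℝ) : Measurable (Ncnt p c) :=
  Measurable.ennreal_tsum fun j => measurable_const.indicator measurableSet_Iio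

lemma Ncnt_eq_card (c t : ℝ) (hfin : {j : ℕ | t < c * p j}.Finite) :
    Ncnt p c t = (Nat.card {j : ℕ | t < c * p j} : ℝ≥0∞) := by
  have h1 : Ncnt p c t = ∑' (i : ℕ), Set.indicator {k : ℕ | t < c * p k} (fun _ => (1:ℝ≥0∞)) i := by
    unfold Ncnt
    congr 1 with i
  rw [h1, ← tsum_subtype]
  haveI := hfin.fintype
  rw [tsum_fintype]
  simp only [Finset.sum_const, Finset.card_univ, nsmul_eq_mul, mul_one]
  congr 1
  exact Nat.card_eq_fintype_card.symm

lemma Ncnt_eq_top (c t : ℝ) (hinf : ¬ {j : ℕ | t < c * p j}.Finite) :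
    Ncnt p c t = ⊤ := by
  have h1 : Ncnt p c t = ∑' (i : ℕ), Set.indicator {k : ℕ | t < c * p k} (fun _ => (1:ℝ≥0∞)) i := by
    unfold Ncnt
    congr 1 with i
  rw [h1, ← tsum_subtype]
  haveI : Infinite {j : ℕ | t < c * p j} := Set.infinite_coe_iff.2 hinf
  exact ENNReal.tsum_const_eq_top_of_ne_zero one_ne_zero

lemma card_eq_toReal (c t : ℝ) :
    (Nat.card {j : ℕ | t < c * p j} : ℝ) = (Ncnt p c t).toReal := by
  by_cases hfin : {j : ℕ | t < c * p j}.Finite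
  · rw [Ncnt_eq_card c t hfin]
    simp
  · rw [Ncnt_eq_top c t hfin]
    haveI : Infinite {j : ℕ | t < c * p j} := Set.infinite_coe_iff.2 hfin
    simp only [ENNReal.toReal_top, Nat.cast_eq_zero]
    exact Nat.card_eq_zero_of_infinite

lemma cardfun_measurable (c : ℝ) :
    Measurable (fun t : ℝ => (Nat.card {j : ℕ | t < c * p j} : ℝ)) := by
  simp_rw [card_eq_toReal]
  exact ENNReal.measurable_toReal.comp (Ncnt_measurable c)

lemma summable_one_sub_exp (hp : ∀ j, 0 < p j) (hsum : Summable p) (c : ℝ) (hc : 0 ≤ c) :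
    Summable (fun j => 1 - Real.exp (-(c * p j))) := by
  refine Summable.of_nonneg_of_le (fun j => ?_) (fun j => ?_) (hsum.mul_left c)
  · have : Real.exp (-(c * p j)) ≤ 1 :=
      Real.exp_le_one_iff.2 (neg_nonpos.2 (mul_nonneg hc (hp j).le))
    linarith
  · have h := Real.add_one_le_exp (-(c * p j))
    linarith

/-- Key integral identity. -/
lemma integral_identity (hp : ∀ j, 0 < p j) (hsum : Summable p) (c : ℝ) (hc : 0 ≤ c) :
    ∫ t in Ioi (0:ℝ), Real.exp (-t) * (Nat.card {j : ℕ | t < c * p j} : ℝ)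
      = ∑' j : ℕ, (1 - Real.exp (-(c * p j))) := by
  -- lintegral computation
  have hlin : ∫⁻ t in Ioi (0:ℝ), ENNReal.ofReal (Real.exp (-t)) * Ncnt p c t
      = ENNReal.ofReal (∑' j : ℕ, (1 - Real.exp (-(c * p j)))) := by
    have hswap : ∫⁻ t in Ioi (0:ℝ), ENNReal.ofReal (Real.exp (-t)) * Ncnt p c t
        = ∑' (j : ℕ), ∫⁻ t in Ioi (0:ℝ),
            ENNReal.ofReal (Real.exp (-t)) * (Set.Iio (c * p j)).indicator (fun _ => (1:ℝ≥0∞)) t := by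
      rw [← lintegral_tsum]
      · congr 1 with t
        unfold Ncnt
        rw [ENNReal.tsum_mul_left]
      · intro j
        exact ((ENNReal.measurable_ofReal.comp
          (Real.measurable_exp.comp measurable_neg)).mul
          (measurable_const.indicator measurableSet_Iio)).aemeasurable
    rw [hswap]
    have hterm : ∀ j : ℕ, ∫⁻ t in Ioi (0:ℝ),
        ENNReal.ofReal (Real.exp (-t)) * (Set.Iio (c * p j)).indicator (fun _ => (1:ℝ≥0∞)) t
        = ENNReal.ofReal (1 - Real.exp (-(c * p j))) := by
      intro j
      have hrw : ∀ t : ℝ, ENNReal.ofReal (Real.exp (-t)) * (Set.Iio (c * p j)).indicator (fun _ => (1:ℝ≥0∞)) t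
          = (Set.Iio (c * p j)).indicator (fun s => ENNReal.ofReal (Real.exp (-s))) t := by
        intro t
        by_cases h : t ∈ Set.Iio (c * p j)
        · rw [Set.indicator_of_mem h, Set.indicator_of_mem h, mul_one]
        · rw [Set.indicator_of_notMem h, Set.indicator_of_notMem h, mul_zero]
      simp_rw [hrw]
      rw [lintegral_indicator measurableSet_Iio, Measure.restrict_restrict measurableSet_Iio]
      have : Set.Iio (c * p j) ∩ Set.Ioi (0:ℝ) = Set.Ioo 0 (c * p j) := by
        rw [Set.inter_comm, Set.Ioi_inter_Iio]
      rw [this]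
      have hint : IntegrableOn (fun t => Real.exp (-t)) (Set.Ioo 0 (c * p j)) :=
        ((Real.continuous_exp.comp continuous_neg).integrableOn_Ioc).mono_set
          Set.Ioo_subset_Ioc_self
      rw [← ofReal_integral_eq_lintegral_ofReal hint
        (Filter.Eventually.of_forall fun t => (Real.exp_pos _).le)]
      congr 1
      rw [← MeasureTheory.integral_Ioc_eq_integral_Ioo,
        ← intervalIntegral.integral_of_le (by have := hp j; positivity : (0:ℝ) ≤ c * p j)]
      have := intervalIntegral.integral_comp_neg (fun x => Real.exp x) (a := 0) (b := c * p j)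
      rw [this, integral_exp]
      simp
    simp_rw [hterm]
    rw [← ENNReal.ofReal_tsum_of_nonneg]
    · intro j
      have h := Real.add_one_le_exp (-(c * p j))
      have : Real.exp (-(c * p j)) ≤ 1 :=
        Real.exp_le_one_iff.2 (neg_nonpos.2 (mul_nonneg hc (hp j).le))
      linarith
    · exact summable_one_sub_exp hp hsum c hc
  -- now convert the real integral to the lintegral
  have hmeas : AEStronglyMeasurable
      (fun t => Real.exp (-t) * (Nat.card {j : ℕ | t < c * p j} : ℝ))
      (volume.restrict (Ioi (0:ℝ))) :=
    ((Real.measurable_exp.comp measurable_neg).mul (cardfun_measurable c)).aestronglyMeasurable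
  rw [integral_eq_lintegral_of_nonneg_ae
    (Filter.Eventually.of_forall fun t =>
      mul_nonneg (Real.exp_pos _).le (Nat.cast_nonneg _)) hmeas]
  have hae : ∀ᵐ t ∂(volume.restrict (Ioi (0:ℝ))),
      ENNReal.ofReal (Real.exp (-t) * (Nat.card {j : ℕ | t < c * p j} : ℝ))
      = ENNReal.ofReal (Real.exp (-t)) * Ncnt p c t := by
    rw [ae_restrict_iff' measurableSet_Ioi]
    refine Filter.Eventually.of_forall fun t ht => ?_
    have hfin : {j : ℕ | t < c * p j}.Finite := fin_lt hp hsum c t ht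
    rw [card_eq_toReal, ENNReal.ofReal_mul (Real.exp_pos _).le,
      ENNReal.ofReal_toReal]
    rw [Ncnt_eq_card c t hfin]
    exact ENNReal.natCast_ne_top _
  rw [lintegral_congr_ae hae, hlin, ENNReal.toReal_ofReal]
  exact tsum_nonneg fun j => by
    have h : Real.exp (-(c * p j)) ≤ 1 :=
      Real.exp_le_one_iff.2 (neg_nonpos.2 (mul_nonneg hc (hp j).le))
    linarith


/-- Potter-type bound from regular variation, using monotonicity. -/
lemma potter (hp : ∀ j, 0 < p j) (hsum : Summable p) {γ ρ : ℝ}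
    (hγ0 : 0 < γ) (hγρ : γ < ρ) (hRV : RegularlyVarying (alpha0 p) γ) :
    ∃ n₀ : ℕ, 1 ≤ n₀ ∧ (∀ n : ℕ, n₀ ≤ n → 1 ≤ alpha0 p n) ∧
      ∀ n : ℕ, n₀ ≤ n → ∀ u : ℝ, 1 ≤ u →
        alpha0 p ((n : ℝ) * u) ≤ 2 ^ ρ * u ^ ρ * alpha0 p n := by
  have h2γρ : (2:ℝ) ^ γ < 2 ^ ρ := (Real.rpow_lt_rpow_left_iff one_lt_two).2 hγρ
  have hev : ∀ᶠ n : ℕ in atTop, alpha0 p ((n:ℝ) * 2) / alpha0 p n < 2 ^ ρ :=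
    (hRV 2 two_pos).eventually_lt_const h2γρ
  obtain ⟨N, hN⟩ := eventually_atTop.1 hev
  set m₁ : ℕ := ⌈1 / p 0⌉₊ + 1 with hm₁
  have hm₁pos : ∀ n : ℕ, m₁ ≤ n → 1 ≤ alpha0 p n := by
    intro n hn
    apply alpha0_pos hp hsum
    calc 1 / p 0 ≤ (⌈1 / p 0⌉₊ : ℝ) := Nat.le_ceil _
    _ ≤ (n : ℝ) := by exact_mod_cast le_trans (Nat.le_succ _) hn
  refine ⟨max N (max m₁ 1), le_trans (le_max_right _ _) (le_max_right _ _), ?_, ?_⟩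
  · intro n hn
    exact hm₁pos n (le_trans (le_trans (le_max_left _ _) (le_max_right _ _)) hn)
  set n₀ := max N (max m₁ 1) with hn₀
  have hdouble : ∀ m : ℕ, n₀ ≤ m → alpha0 p ((m:ℝ) * 2) ≤ 2 ^ ρ * alpha0 p m := by
    intro m hm
    have hα : (0:ℝ) < alpha0 p m := lt_of_lt_of_le one_pos
      (hm₁pos m (le_trans (le_trans (le_max_left _ _) (le_max_right _ _)) hm))
    have := hN m (le_trans (le_max_left _ _) hm)
    rw [div_lt_iff₀ hα] at this
    linarith
  have hiter : ∀ k : ℕ, ∀ m : ℕ, n₀ ≤ m →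
      alpha0 p ((2 ^ k * m : ℕ) : ℝ) ≤ (2 ^ ρ) ^ k * alpha0 p m := by
    intro k
    induction k with
    | zero => intro m hm; simpa using le_refl _
    | succ k ih =>
      intro m hm
      have h1 : n₀ ≤ 2 ^ k * m := le_trans hm (Nat.le_mul_of_pos_left m (pow_pos two_pos k))
      have h2 : ((2 ^ (k+1) * m : ℕ) : ℝ) = ((2 ^ k * m : ℕ) : ℝ) * 2 := by
        push_cast; ring
      calc alpha0 p ((2 ^ (k+1) * m : ℕ) : ℝ)
          = alpha0 p (((2 ^ k * m : ℕ) : ℝ) * 2) := by rw [h2]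
        _ ≤ 2 ^ ρ * alpha0 p ((2 ^ k * m : ℕ) : ℝ) := hdouble _ h1
        _ ≤ 2 ^ ρ * ((2 ^ ρ) ^ k * alpha0 p m) := by
            apply mul_le_mul_of_nonneg_left (ih m hm)
            positivity
        _ = (2 ^ ρ) ^ (k+1) * alpha0 p m := by ring
  intro n hn u hu
  have hu0 : (0:ℝ) < u := lt_of_lt_of_le one_pos hu
  set k : ℕ := ⌈Real.logb 2 u⌉₊ with hk
  have hlogb : 0 ≤ Real.logb 2 u := Real.logb_nonneg one_lt_two hu
  have hu2k : u ≤ (2:ℝ) ^ (k:ℕ) := by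
    have h1 : Real.logb 2 u ≤ (k : ℝ) := Nat.le_ceil _
    calc u = (2:ℝ) ^ Real.logb 2 u := (Real.rpow_logb two_pos (by norm_num) hu0).symm
    _ ≤ (2:ℝ) ^ (k:ℝ) := (Real.rpow_le_rpow_left_iff one_lt_two).2 h1
    _ = (2:ℝ) ^ (k:ℕ) := Real.rpow_natCast 2 k
  have hmono := alpha0_mono hp hsum
  have hαnonneg : 0 ≤ alpha0 p n := alpha0_nonneg _
  have hAk : ((2:ℝ) ^ ρ) ^ k ≤ 2 ^ ρ * u ^ ρ := by
    have e1 : ((2:ℝ) ^ ρ) ^ k = (2:ℝ) ^ (ρ * k) := by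
      rw [← Real.rpow_natCast ((2:ℝ) ^ ρ) k, ← Real.rpow_mul (by norm_num : (0:ℝ) ≤ 2)]
    have e2 : (k : ℝ) ≤ Real.logb 2 u + 1 := le_of_lt (Nat.ceil_lt_add_one hlogb)
    have e3 : ρ * (k:ℝ) ≤ ρ * (Real.logb 2 u + 1) :=
      mul_le_mul_of_nonneg_left e2 (by linarith)
    calc ((2:ℝ) ^ ρ) ^ k = (2:ℝ) ^ (ρ * (k:ℝ)) := e1
    _ ≤ (2:ℝ) ^ (ρ * (Real.logb 2 u + 1)) := (Real.rpow_le_rpow_left_iff one_lt_two).2 e3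
    _ = (2:ℝ) ^ (Real.logb 2 u * ρ + ρ) := by ring_nf
    _ = ((2:ℝ) ^ Real.logb 2 u) ^ ρ * 2 ^ ρ := by
        rw [Real.rpow_add two_pos, Real.rpow_mul (by norm_num : (0:ℝ) ≤ 2)]
    _ = u ^ ρ * 2 ^ ρ := by rw [Real.rpow_logb two_pos (by norm_num) hu0]
    _ = 2 ^ ρ * u ^ ρ := by ring
  calc alpha0 p ((n:ℝ) * u) ≤ alpha0 p ((n:ℝ) * (2:ℝ) ^ (k:ℕ)) := by
        apply hmono
        exact mul_le_mul_of_nonneg_left hu2k (Nat.cast_nonneg n)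
    _ = alpha0 p ((2 ^ k * n : ℕ) : ℝ) := by congr 1; push_cast; ring
    _ ≤ ((2:ℝ) ^ ρ) ^ k * alpha0 p n := hiter k n hn
    _ ≤ 2 ^ ρ * u ^ ρ * alpha0 p n := mul_le_mul_of_nonneg_right hAk hαnonneg

lemma pointwise_limit (hp : ∀ j, 0 < p j) (hsum : Summable p) {γ : ℝ} (hγ0 : 0 < γ)
    (hRV : RegularlyVarying (alpha0 p) γ) {t : ℝ} (ht : 0 < t) :
    Tendsto (fun n : ℕ => (Nat.card {j : ℕ | t < (n:ℝ) * p j} : ℝ) / alpha0 p n)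
      atTop (𝓝 (t ^ (-γ))) := by
  set u : ℝ := 1 / t with hudef
  have hu : 0 < u := by positivity
  have hval : t ^ (-γ) = u ^ γ := by
    rw [hudef, one_div, Real.inv_rpow ht.le, ← Real.rpow_neg ht.le]
  rw [hval]
  rw [Metric.tendsto_atTop]
  intro ε hε
  -- choose s < u with u^γ - ε/2 < s^γ
  have hcont : Tendsto (fun s : ℝ => s ^ γ) (𝓝[<] u) (𝓝 (u ^ γ)) :=
    ((Real.continuousAt_rpow_const u γ (Or.inl (ne_of_gt hu)))).tendsto.mono_left
      nhdsWithin_le_nhds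
  have h1 : ∀ᶠ s in 𝓝[<] u, u ^ γ - ε < s ^ γ :=
    hcont.eventually_const_lt (by linarith)
  have h2 : ∀ᶠ s in 𝓝[<] u, 0 < s :=
    (eventually_gt_nhds hu).filter_mono nhdsWithin_le_nhds
  have h3 : ∀ᶠ s in 𝓝[<] u, s < u :=
    eventually_mem_nhdsWithin.mono (fun s hs => hs)
  obtain ⟨s, hs1, hs0, hsu⟩ := (h1.and (h2.and h3)).exists
  -- eventual bounds in n
  have E1 : ∀ᶠ n : ℕ in atTop, u ^ γ - ε < alpha0 p ((n:ℝ) * s) / alpha0 p n :=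
    (hRV s hs0).eventually_const_lt (lt_of_lt_of_le hs1 (le_refl _))
  have E2 : ∀ᶠ n : ℕ in atTop, alpha0 p ((n:ℝ) * u) / alpha0 p n < u ^ γ + ε :=
    (hRV u hu).eventually_lt_const (by linarith)
  have E3 : ∀ᶠ n : ℕ in atTop, 1 ≤ alpha0 p ((n:ℝ)) ∧ (0:ℝ) < n := by
    filter_upwards [eventually_ge_atTop (⌈1 / p 0⌉₊ + 1)] with n hn
    constructor
    · apply alpha0_pos hp hsum
      calc 1 / p 0 ≤ (⌈1 / p 0⌉₊ : ℝ) := Nat.le_ceil _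
      _ ≤ (n : ℝ) := by exact_mod_cast le_trans (Nat.le_succ _) hn
    · have : 1 ≤ n := le_trans (Nat.le_add_left _ _) hn
      exact_mod_cast Nat.pos_of_ne_zero (by omega)
  obtain ⟨M, hM⟩ := eventually_atTop.1 ((E1.and E2).and E3)
  refine ⟨M, fun n hn => ?_⟩
  obtain ⟨⟨hb1, hb2⟩, hb3, hb4⟩ := hM n hn
  have hαpos : (0:ℝ) < alpha0 p n := lt_of_lt_of_le one_pos hb3
  have hst : s * t < 1 := by
    have : s * t < u * t := mul_lt_mul_of_pos_right hsu ht
    rwa [hudef, one_div, inv_mul_cancel₀ ht.ne'] at this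
  have hlow : alpha0 p ((n:ℝ) * s) ≤ (Nat.card {j : ℕ | t < (n:ℝ) * p j} : ℝ) :=
    alpha_le_card hp hsum ht hs0 hst hb4
  have hhigh : (Nat.card {j : ℕ | t < (n:ℝ) * p j} : ℝ) ≤ alpha0 p ((n:ℝ) * u) := by
    have := card_le_alpha hp hsum ((n:ℝ)) t ht (le_of_lt hb4)
    rwa [hudef]
  have hlow' : u ^ γ - ε < (Nat.card {j : ℕ | t < (n:ℝ) * p j} : ℝ) / alpha0 p n :=
    lt_of_lt_of_le hb1 ((div_le_div_iff_of_pos_right hαpos).2 hlow)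
  have hhigh' : (Nat.card {j : ℕ | t < (n:ℝ) * p j} : ℝ) / alpha0 p n < u ^ γ + ε :=
    lt_of_le_of_lt ((div_le_div_iff_of_pos_right hαpos).2 hhigh) hb2
  rw [Real.dist_eq, abs_sub_lt_iff]
  constructor <;> linarith


/-- Lemma (Karlin): `α(n)⁻¹ ∑_j P(M_{n,j} ≥ 1) = α(n)⁻¹ ∑_j (1 - e^{-n p_j}) → Γ(1-γ)`,
for independent `M_{n,j} ∼ Poisson(n p_j)`. -/
theorem poisson_occupancy_first_moment
    (p : ℕ → ℝ) (hp : ∀ j, 0 < p j) (hpsum : HasSum p 1)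
    (γ : ℝ) (hγ : γ ∈ Set.Ioo (0 : ℝ) 1)
    (hRV : RegularlyVarying (alpha0 p) γ) :
    Tendsto (fun n : ℕ => (∑' j : ℕ, (1 - Real.exp (-((n : ℝ) * p j)))) / alpha0 p n)
      atTop (𝓝 (Real.Gamma (1 - γ))) := by
  obtain ⟨hγ0, hγ1⟩ := hγ
  have hsum : Summable p := hpsum.summable
  set ρ : ℝ := (γ + 1) / 2 with hρdef
  have hγρ : γ < ρ := by rw [hρdef]; linarith
  have hρ1 : ρ < 1 := by rw [hρdef]; linarith
  have hρ0 : 0 < ρ := by rw [hρdef]; linarith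
  obtain ⟨n₀, hn₀1, hpos, hpotter⟩ := potter hp hsum hγ0 hγρ hRV
  rw [← tendsto_add_atTop_iff_nat n₀]
  -- the sequence of integrands
  set F : ℕ → ℝ → ℝ := fun n t =>
    Real.exp (-t) * (Nat.card {j : ℕ | t < ((n + n₀ : ℕ) : ℝ) * p j} : ℝ)
      / alpha0 p ((n + n₀ : ℕ) : ℝ) with hFdef
  have hseq : (fun n : ℕ => (∑' j : ℕ, (1 - Real.exp (-(((n + n₀ : ℕ) : ℝ) * p j))))
      / alpha0 p ((n + n₀ : ℕ) : ℝ)) = fun n : ℕ => ∫ t in Ioi (0:ℝ), F n t := by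
    funext n
    rw [hFdef]
    rw [← integral_identity hp hsum ((n + n₀ : ℕ) : ℝ) (Nat.cast_nonneg _), ← integral_div]
  rw [hseq]
  -- the limit function and its integral
  have hΓ : Real.Gamma (1 - γ) = ∫ t in Ioi (0:ℝ), Real.exp (-t) * t ^ (-γ) := by
    rw [Real.Gamma_eq_integral (by linarith : (0:ℝ) < 1 - γ)]
    congr 1 with t
    norm_num
  rw [hΓ]
  -- dominated convergence
  set bound : ℝ → ℝ := fun t => (2:ℝ) ^ ρ * (Real.exp (-t) * t ^ (-ρ)) + Real.exp (-t)
    with hbdef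
  apply MeasureTheory.tendsto_integral_of_dominated_convergence bound
  · intro n
    exact (((Real.measurable_exp.comp measurable_neg).mul
      (cardfun_measurable _)).div_const _).aestronglyMeasurable
  · apply Integrable.add
    · have h1 : IntegrableOn (fun x : ℝ => Real.exp (-x) * x ^ ((1 - ρ) - 1)) (Ioi 0) :=
        Real.GammaIntegral_convergent (by linarith : (0:ℝ) < 1 - ρ)
      have h2 : (fun x : ℝ => Real.exp (-x) * x ^ ((1 - ρ) - 1))
          = fun x : ℝ => Real.exp (-x) * x ^ (-ρ) := by
        funext x; norm_num
      rw [h2] at h1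
      exact h1.const_mul _
    · have h3 : IntegrableOn (fun x : ℝ => Real.exp (-(1:ℝ) * x)) (Ioi 0) :=
        exp_neg_integrableOn_Ioi 0 one_pos
      have h4 : (fun x : ℝ => Real.exp (-(1:ℝ) * x)) = fun x : ℝ => Real.exp (-x) := by
        funext x; norm_num
      rwa [h4] at h3
  · intro n
    rw [ae_restrict_iff' measurableSet_Ioi]
    refine Filter.Eventually.of_forall fun t ht => ?_
    have ht0 : (0:ℝ) < t := ht
    have hA : (1:ℝ) ≤ alpha0 p ((n + n₀ : ℕ) : ℝ) := hpos (n + n₀) (Nat.le_add_left _ _)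
    have hApos : (0:ℝ) < alpha0 p ((n + n₀ : ℕ) : ℝ) := lt_of_lt_of_le one_pos hA
    have hFnonneg : 0 ≤ F n t := by
      rw [hFdef]
      exact div_nonneg (mul_nonneg (Real.exp_pos _).le (Nat.cast_nonneg _)) hApos.le
    rw [Real.norm_eq_abs, abs_of_nonneg hFnonneg]
    have hcard_le : (Nat.card {j : ℕ | t < ((n + n₀ : ℕ) : ℝ) * p j} : ℝ)
        ≤ alpha0 p (((n + n₀ : ℕ) : ℝ) * (1 / t)) :=
      card_le_alpha hp hsum _ t ht0 (Nat.cast_nonneg _)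
    rcases le_or_gt t 1 with hle | hlt
    · -- small t : use Potter
      have h1t : (1:ℝ) ≤ 1 / t := by
        rw [le_div_iff₀ ht0]; linarith
      have hp2 : alpha0 p (((n + n₀ : ℕ) : ℝ) * (1 / t))
          ≤ 2 ^ ρ * (1 / t) ^ ρ * alpha0 p ((n + n₀ : ℕ) : ℝ) :=
        hpotter (n + n₀) (Nat.le_add_left _ _) (1 / t) h1t
      have hrw : ((1:ℝ) / t) ^ ρ = t ^ (-ρ) := by
        rw [one_div, Real.inv_rpow ht0.le, ← Real.rpow_neg ht0.le]
      have : F n t ≤ Real.exp (-t) * (2 ^ ρ * t ^ (-ρ)) := by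
        rw [hFdef, div_le_iff₀ hApos]
        calc Real.exp (-t) * (Nat.card {j : ℕ | t < ((n + n₀ : ℕ) : ℝ) * p j} : ℝ)
            ≤ Real.exp (-t) * (2 ^ ρ * (1 / t) ^ ρ * alpha0 p ((n + n₀ : ℕ) : ℝ)) := by
              apply mul_le_mul_of_nonneg_left _ (Real.exp_pos _).le
              exact le_trans hcard_le hp2
          _ = Real.exp (-t) * (2 ^ ρ * t ^ (-ρ)) * alpha0 p ((n + n₀ : ℕ) : ℝ) := by
              rw [hrw]; ring
      rw [hbdef]
      have hexp : (0:ℝ) ≤ Real.exp (-t) := (Real.exp_pos _).le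
      calc F n t ≤ Real.exp (-t) * (2 ^ ρ * t ^ (-ρ)) := this
        _ = (2:ℝ) ^ ρ * (Real.exp (-t) * t ^ (-ρ)) := by ring
        _ ≤ (2:ℝ) ^ ρ * (Real.exp (-t) * t ^ (-ρ)) + Real.exp (-t) := by linarith
    · -- large t : the count is at most α(n + n₀)
      have hmono := alpha0_mono hp hsum
      have hp3 : alpha0 p (((n + n₀ : ℕ) : ℝ) * (1 / t)) ≤ alpha0 p ((n + n₀ : ℕ) : ℝ) := by
        apply hmono
        calc ((n + n₀ : ℕ) : ℝ) * (1 / t) ≤ ((n + n₀ : ℕ) : ℝ) * 1 := by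
              apply mul_le_mul_of_nonneg_left _ (Nat.cast_nonneg _)
              rw [div_le_one ht0]; linarith
          _ = ((n + n₀ : ℕ) : ℝ) := mul_one _
      have : F n t ≤ Real.exp (-t) := by
        rw [hFdef, div_le_iff₀ hApos]
        calc Real.exp (-t) * (Nat.card {j : ℕ | t < ((n + n₀ : ℕ) : ℝ) * p j} : ℝ)
            ≤ Real.exp (-t) * alpha0 p ((n + n₀ : ℕ) : ℝ) := by
              apply mul_le_mul_of_nonneg_left _ (Real.exp_pos _).le
              exact le_trans hcard_le hp3
          _ = Real.exp (-t) * alpha0 p ((n + n₀ : ℕ) : ℝ) := rfl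
      have hnn : (0:ℝ) ≤ (2:ℝ) ^ ρ * (Real.exp (-t) * t ^ (-ρ)) := by positivity
      calc F n t ≤ Real.exp (-t) := this
        _ ≤ (2:ℝ) ^ ρ * (Real.exp (-t) * t ^ (-ρ)) + Real.exp (-t) := by linarith
  · rw [ae_restrict_iff' measurableSet_Ioi]
    refine Filter.Eventually.of_forall fun t ht => ?_
    have ht0 : (0:ℝ) < t := ht
    have hbase := pointwise_limit hp hsum hγ0 hRV ht0
    have hshift : Tendsto (fun n : ℕ =>
        (Nat.card {j : ℕ | t < ((n + n₀ : ℕ) : ℝ) * p j} : ℝ) / alpha0 p ((n + n₀ : ℕ) : ℝ))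
        atTop (𝓝 (t ^ (-γ))) := hbase.comp (tendsto_add_atTop_nat n₀)
    have := hshift.const_mul (Real.exp (-t))
    simp only [hFdef, mul_div_assoc]
    exact this

end
end

section
/- Suppose $\alpha(u):=\#\{j: 1/p_j\le u\}$ is regularly varying at $\infty$ of order $\gamma\in(0,1)$. Then $\frac{1}{\alpha(n)}\sum_{j=1}^\infty \mathrm{Var}(1_{M_{n,j}\ge 1})=\frac{1}{\alpha(n)}\sum_{j=1}^\infty e^{-np_j}(1-e^{-np_j})\to(2^\gamma-1)\Gamma(1-\gamma)$ as $n\to\infty$. -/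
open Filter Topology Real Set MeasureTheory ENNReal

noncomputable section

lemma set_eq {p : ℕ → ℝ} (hp : ∀ j, 0 < p j) (u : ℝ) (hu : 0 < u) :
    {j : ℕ | 1 / p j ≤ u} = {j : ℕ | 1 / u ≤ p j} := by
  ext j; simp only [mem_setOf_eq]; exact one_div_le (hp j) hu

lemma alpha_finite {p : ℕ → ℝ} (hp : ∀ j, 0 < p j) (hpsum : Summable p) (u : ℝ) :
    {j : ℕ | 1 / p j ≤ u}.Finite := by
  rcases le_or_gt u 0 with hu | hu
  · convert Set.finite_empty
    ext j; simp only [mem_setOf_eq, Set.mem_empty_iff_false, iff_false, not_le]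
    exact lt_of_le_of_lt hu (one_div_pos.mpr (hp j))
  · rw [set_eq hp u hu]
    have h := hpsum.tendsto_cofinite_zero.eventually (gt_mem_nhds (by positivity : (0:ℝ) < 1/u))
    have h2 := Filter.eventually_cofinite.mp (h.mono (fun j hj => not_le.mpr hj))
    convert h2 using 1
    ext j; simp [not_not]

lemma alpha_mono {p : ℕ → ℝ} (hp : ∀ j, 0 < p j) (hpsum : Summable p) :
    Monotone (alpha0 p) := by
  intro u v huv
  have hsub : {j : ℕ | 1 / p j ≤ u} ⊆ {j : ℕ | 1 / p j ≤ v} := fun j hj => le_trans hj huv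
  have := Nat.card_mono (alpha_finite hp hpsum v) hsub
  unfold alpha0
  exact_mod_cast this

lemma alpha_nonneg (p : ℕ → ℝ) (u : ℝ) : 0 ≤ alpha0 p u := Nat.cast_nonneg _

lemma alpha_meas {p : ℕ → ℝ} (hp : ∀ j, 0 < p j) (hpsum : Summable p) :
    Measurable (alpha0 p) := (alpha_mono hp hpsum).measurable

lemma alpha_one_le {p : ℕ → ℝ} (hp : ∀ j, 0 < p j) (hpsum : Summable p) :
    ∀ᶠ n : ℕ in atTop, 1 ≤ alpha0 p (n : ℝ) := by
  filter_upwards [eventually_ge_atTop ⌈1 / p 0⌉₊] with n hn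
  have h0 : (0 : ℕ) ∈ {j : ℕ | 1 / p j ≤ (n : ℝ)} := by
    simp only [mem_setOf_eq]
    exact le_trans (Nat.le_ceil _) (by exact_mod_cast hn)
  haveI : Finite ({j : ℕ | 1 / p j ≤ (n : ℝ)} : Set ℕ) := alpha_finite hp hpsum (n : ℝ)
  haveI : Nonempty ({j : ℕ | 1 / p j ≤ (n : ℝ)} : Set ℕ) := ⟨⟨0, h0⟩⟩
  have h1 : 0 < Nat.card {j : ℕ | 1 / p j ≤ (n : ℝ)} := Nat.card_pos
  unfold alpha0
  exact_mod_cast h1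

lemma one_sub_exp_le (x : ℝ) : 1 - Real.exp (-x) ≤ x := by
  have := Real.add_one_le_exp (-x); linarith

lemma one_sub_exp_nonneg {x : ℝ} (hx : 0 ≤ x) : 0 ≤ 1 - Real.exp (-x) := by
  have : Real.exp (-x) ≤ 1 := Real.exp_le_one_iff.mpr (by linarith)
  linarith

lemma summ_one_sub {p : ℕ → ℝ} (hp : ∀ j, 0 < p j) (hpsum : Summable p) {t : ℝ} (ht : 0 ≤ t) :
    Summable (fun j => 1 - Real.exp (-(t * p j))) :=
  Summable.of_nonneg_of_le (fun j => one_sub_exp_nonneg (mul_nonneg ht (hp j).le))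
    (fun j => one_sub_exp_le _) (hpsum.mul_left t)

lemma lint_exp_Ioc {a : ℝ} (ha : 0 < a) :
    ∫⁻ s in Ioc 0 a, ENNReal.ofReal (Real.exp (-s)) = ENNReal.ofReal (1 - Real.exp (-a)) := by
  have hint : IntegrableOn (fun s => Real.exp (-s)) (Ioc 0 a) :=
    (Real.continuous_exp.comp continuous_neg).integrableOn_Ioc
  rw [← ofReal_integral_eq_lintegral_ofReal hint
    (Filter.Eventually.of_forall (fun s => (Real.exp_pos _).le))]
  congr 1
  rw [← intervalIntegral.integral_of_le ha.le]
  have := intervalIntegral.integral_comp_neg (a := 0) (b := a) (fun x => Real.exp x)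
  rw [this, integral_exp]
  simp

lemma key_integral {p : ℕ → ℝ} (hp : ∀ j, 0 < p j) (hpsum : Summable p) {t : ℝ} (ht : 0 < t) :
    ∫⁻ s in Ioi (0:ℝ), ENNReal.ofReal (Real.exp (-s) * alpha0 p (t / s)) =
      ENNReal.ofReal (∑' j, (1 - Real.exp (-(t * p j)))) := by
  have hmain : ∀ s ∈ Ioi (0:ℝ),
      ENNReal.ofReal (Real.exp (-s) * alpha0 p (t / s)) =
      ∑' j : ℕ, (Iic (t * p j)).indicator (fun s' => ENNReal.ofReal (Real.exp (-s'))) s := by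
    intro s hs
    have hs0 : (0:ℝ) < s := hs
    have hset : {j : ℕ | 1 / p j ≤ t / s} = {j : ℕ | s ≤ t * p j} := by
      ext j; simp only [mem_setOf_eq, div_le_div_iff₀ (hp j) hs0, one_mul]
    have hfin : {j : ℕ | s ≤ t * p j}.Finite := by
      rw [← hset]; exact alpha_finite hp hpsum _
    haveI : Fintype ({j : ℕ | s ≤ t * p j} : Set ℕ) := hfin.fintype
    have hcard : (Nat.card {j : ℕ | 1 / p j ≤ t / s} : ℝ≥0∞) =
        ∑' j : ℕ, ({j : ℕ | s ≤ t * p j}).indicator (fun _ => (1:ℝ≥0∞)) j := by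
      rw [hset, ← tsum_subtype, tsum_fintype]
      simp only [smul_eq_mul, Finset.sum_const, Finset.card_univ, nsmul_eq_mul, mul_one]
      norm_cast
      exact Nat.card_eq_fintype_card
    calc ENNReal.ofReal (Real.exp (-s) * alpha0 p (t / s))
        = ENNReal.ofReal (Real.exp (-s)) * (Nat.card {j : ℕ | 1 / p j ≤ t / s} : ℝ≥0∞) := by
          rw [ENNReal.ofReal_mul (Real.exp_pos _).le]
          congr 1
          simp [alpha0, ENNReal.ofReal_natCast]
      _ = ∑' j : ℕ, ENNReal.ofReal (Real.exp (-s)) *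
            ({j : ℕ | s ≤ t * p j}).indicator (fun _ => (1:ℝ≥0∞)) j := by
          rw [hcard, ENNReal.tsum_mul_left]
      _ = ∑' j : ℕ, (Iic (t * p j)).indicator (fun s' => ENNReal.ofReal (Real.exp (-s'))) s := by
          apply tsum_congr; intro j
          by_cases h : s ≤ t * p j
          · simp [Set.indicator_of_mem, h, Set.mem_setOf_eq, Set.mem_Iic]
          · simp [Set.indicator_of_notMem, h, Set.mem_setOf_eq, Set.mem_Iic]
  rw [setLIntegral_congr_fun measurableSet_Ioi hmain]
  have hmeas : ∀ j : ℕ, AEMeasurable (fun s : ℝ =>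
      (Iic (t * p j)).indicator (fun s' => ENNReal.ofReal (Real.exp (-s'))) s)
      (volume.restrict (Ioi 0)) := fun j =>
    (Measurable.indicator (by fun_prop) measurableSet_Iic).aemeasurable
  rw [lintegral_tsum hmeas]
  rw [ENNReal.ofReal_tsum_of_nonneg (fun j => one_sub_exp_nonneg (mul_nonneg ht.le (hp j).le))
      (summ_one_sub hp hpsum ht.le)]
  apply tsum_congr; intro j
  rw [lintegral_indicator measurableSet_Iic, Measure.restrict_restrict measurableSet_Iic]
  have : Iic (t * p j) ∩ Ioi 0 = Ioc 0 (t * p j) := by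
    ext x; simp [mem_Ioc, mem_Iic, mem_Ioi, and_comm]
  rw [this, lint_exp_Ioc (mul_pos ht (hp j))]

lemma repr_meas {p : ℕ → ℝ} (hp : ∀ j, 0 < p j) (hpsum : Summable p) (t : ℝ) :
    Measurable (fun s : ℝ => Real.exp (-s) * alpha0 p (t / s)) :=
  (Real.measurable_exp.comp measurable_neg).mul
    ((alpha_meas hp hpsum).comp (measurable_const.div measurable_id))

lemma repr_nonneg {p : ℕ → ℝ} (t s : ℝ) : 0 ≤ Real.exp (-s) * alpha0 p (t / s) :=
  mul_nonneg (Real.exp_pos _).le (alpha_nonneg p _)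

lemma integral_repr {p : ℕ → ℝ} (hp : ∀ j, 0 < p j) (hpsum : Summable p) {t : ℝ} (ht : 0 < t) :
    ∫ s in Ioi (0:ℝ), Real.exp (-s) * alpha0 p (t / s) =
      ∑' j, (1 - Real.exp (-(t * p j))) := by
  rw [integral_eq_lintegral_of_nonneg_ae
    (Filter.Eventually.of_forall (fun s => repr_nonneg t s))
    (repr_meas hp hpsum t).aestronglyMeasurable]
  rw [key_integral hp hpsum ht, ENNReal.toReal_ofReal
    (tsum_nonneg (fun j => one_sub_exp_nonneg (mul_nonneg ht.le (hp j).le)))]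

lemma integrable_repr {p : ℕ → ℝ} (hp : ∀ j, 0 < p j) (hpsum : Summable p) {t : ℝ} (ht : 0 < t) :
    IntegrableOn (fun s : ℝ => Real.exp (-s) * alpha0 p (t / s)) (Ioi 0) := by
  refine ⟨(repr_meas hp hpsum t).aestronglyMeasurable, ?_⟩
  rw [hasFiniteIntegral_iff_ofReal (Filter.Eventually.of_forall (fun s => repr_nonneg t s))]
  rw [key_integral hp hpsum ht]
  exact ENNReal.ofReal_lt_top

lemma main_limit {p : ℕ → ℝ} (hp : ∀ j, 0 < p j) (hpsum : Summable p)
    {γ : ℝ} (hγ : γ ∈ Set.Ioo (0:ℝ) 1) (hRV : RegularlyVarying (alpha0 p) γ) :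
    Tendsto (fun n : ℕ => (∑' j, (1 - Real.exp (-((n:ℝ) * p j)))) / alpha0 p (n:ℝ))
      atTop (𝓝 (Real.Gamma (1 - γ))) := by
  obtain ⟨hγ0, hγ1⟩ := hγ
  set γ' : ℝ := (γ + 1) / 2 with hγ'def
  have hγ'0 : 0 < γ' := by positivity
  have hγ'1 : γ' < 1 := by rw [hγ'def]; linarith
  have hγγ' : γ < γ' := by rw [hγ'def]; linarith
  -- Potter-type bound setup
  have hrpow_lt : (2:ℝ) ^ γ < (2:ℝ) ^ γ' := Real.rpow_lt_rpow_left_iff one_lt_two |>.mpr hγγ'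
  have hev2 : ∀ᶠ n : ℕ in atTop, alpha0 p ((n:ℝ) * 2) / alpha0 p (n:ℝ) ≤ (2:ℝ) ^ γ' :=
    (hRV 2 two_pos).eventually (eventually_le_nhds hrpow_lt)
  have hstep : ∀ᶠ n : ℕ in atTop,
      alpha0 p ((n:ℝ) * 2) ≤ (2:ℝ) ^ γ' * alpha0 p (n:ℝ) ∧ 1 ≤ alpha0 p (n:ℝ) := by
    filter_upwards [hev2, alpha_one_le hp hpsum] with n h1 h2
    refine ⟨?_, h2⟩
    have hpos : (0:ℝ) < alpha0 p (n:ℝ) := lt_of_lt_of_le one_pos h2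
    rw [div_le_iff₀ hpos] at h1
    linarith [h1]
  obtain ⟨N, hN⟩ := eventually_atTop.mp hstep
  -- iterate
  have hiter : ∀ k : ℕ, ∀ n : ℕ, N ≤ n →
      alpha0 p ((2^k * n : ℕ) : ℝ) ≤ ((2:ℝ) ^ γ')^k * alpha0 p (n:ℝ) := by
    intro k
    induction k with
    | zero => intro n hn; simp
    | succ k ih =>
      intro n hn
      have hm : N ≤ 2^k * n := le_trans hn (Nat.le_mul_of_pos_left n (pow_pos two_pos k))
      have h1 := (hN (2^k * n) hm).1
      have hcast : ((2^(k+1) * n : ℕ) : ℝ) = ((2^k * n : ℕ) : ℝ) * 2 := by push_cast; ring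
      calc alpha0 p ((2^(k+1) * n : ℕ) : ℝ) = alpha0 p (((2^k * n : ℕ) : ℝ) * 2) := by rw [hcast]
        _ ≤ (2:ℝ) ^ γ' * alpha0 p ((2^k * n : ℕ) : ℝ) := h1
        _ ≤ (2:ℝ) ^ γ' * (((2:ℝ) ^ γ')^k * alpha0 p (n:ℝ)) :=
            mul_le_mul_of_nonneg_left (ih n hn) (Real.rpow_nonneg two_pos.le _)
        _ = ((2:ℝ) ^ γ')^(k+1) * alpha0 p (n:ℝ) := by ring
  -- ratio bound
  have hratio : ∀ n : ℕ, N ≤ n → ∀ s : ℝ, 0 < s →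
      alpha0 p ((n:ℝ) / s) ≤ ((2:ℝ)^γ' * s ^ (-γ') + 1) * alpha0 p (n:ℝ) := by
    intro n hn s hs
    have hαn0 : (0:ℝ) ≤ alpha0 p (n:ℝ) := alpha_nonneg p _
    rcases le_or_gt 1 s with hs1 | hs1
    · have h1 : alpha0 p ((n:ℝ)/s) ≤ alpha0 p (n:ℝ) :=
        alpha_mono hp hpsum (div_le_self (Nat.cast_nonneg n) hs1)
      nlinarith [Real.rpow_nonneg two_pos.le γ', Real.rpow_nonneg hs.le (-γ'),
        mul_nonneg (Real.rpow_nonneg two_pos.le γ') (Real.rpow_nonneg hs.le (-γ'))]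
    · set k : ℕ := ⌈Real.logb 2 (1/s)⌉₊ with hk
      have hinv1 : 1 ≤ 1/s := (le_div_iff₀ hs).mpr (by linarith)
      have hlog0 : 0 ≤ Real.logb 2 (1/s) := Real.logb_nonneg one_lt_two hinv1
      have hceil : Real.logb 2 (1/s) ≤ (k:ℝ) := Nat.le_ceil _
      have hceil2 : (k:ℝ) < Real.logb 2 (1/s) + 1 := Nat.ceil_lt_add_one hlog0
      have h2k_ge : 1/s ≤ (2:ℝ) ^ (k:ℝ) := by
        calc 1/s = (2:ℝ) ^ Real.logb 2 (1/s) :=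
              (Real.rpow_logb two_pos (by norm_num) (by positivity)).symm
          _ ≤ (2:ℝ) ^ (k:ℝ) := Real.rpow_le_rpow_left_iff one_lt_two |>.mpr hceil
      have h2k_le : (2:ℝ) ^ (k:ℝ) ≤ 2 / s := by
        calc (2:ℝ) ^ (k:ℝ) ≤ (2:ℝ) ^ (Real.logb 2 (1/s) + 1) :=
              Real.rpow_le_rpow_left_iff one_lt_two |>.mpr hceil2.le
          _ = (2:ℝ) ^ Real.logb 2 (1/s) * 2 := by
              rw [Real.rpow_add two_pos, Real.rpow_one]
          _ = 2 / s := by rw [Real.rpow_logb two_pos (by norm_num) (by positivity)]; ring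
      have hdiv_le : (n:ℝ) / s ≤ ((2^k * n : ℕ) : ℝ) := by
        have : (n:ℝ)/s = (n:ℝ) * (1/s) := by ring
        rw [this]
        push_cast
        calc (n:ℝ) * (1/s) ≤ (n:ℝ) * (2:ℝ)^(k:ℝ) :=
              mul_le_mul_of_nonneg_left h2k_ge (Nat.cast_nonneg n)
          _ = 2^k * (n:ℝ) := by rw [Real.rpow_natCast]; ring
      have hpowbound : ((2:ℝ)^γ')^k ≤ (2:ℝ)^γ' * s ^ (-γ') := by
        have e1 : ((2:ℝ)^γ')^k = ((2:ℝ)^(k:ℝ))^γ' := by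
          rw [← Real.rpow_natCast ((2:ℝ)^γ') k, ← Real.rpow_mul two_pos.le,
            ← Real.rpow_mul two_pos.le, mul_comm]
        have e2 : ((2:ℝ)^(k:ℝ))^γ' ≤ (2/s)^γ' :=
          Real.rpow_le_rpow (Real.rpow_nonneg two_pos.le _) h2k_le hγ'0.le
        have e3 : ((2:ℝ)/s)^γ' = (2:ℝ)^γ' * s^(-γ') := by
          rw [Real.div_rpow two_pos.le hs.le, Real.rpow_neg hs.le, div_eq_mul_inv]
        rw [e1, ← e3]; exact e2
      calc alpha0 p ((n:ℝ)/s) ≤ alpha0 p ((2^k * n : ℕ) : ℝ) := alpha_mono hp hpsum hdiv_le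
        _ ≤ ((2:ℝ)^γ')^k * alpha0 p (n:ℝ) := hiter k n hn
        _ ≤ ((2:ℝ)^γ' * s^(-γ')) * alpha0 p (n:ℝ) :=
            mul_le_mul_of_nonneg_right hpowbound hαn0
        _ ≤ ((2:ℝ)^γ' * s^(-γ') + 1) * alpha0 p (n:ℝ) := by nlinarith
  -- DCT
  have hDCT : Tendsto (fun n : ℕ => ∫ s in Ioi (0:ℝ),
      Real.exp (-s) * alpha0 p ((n:ℝ) / s) / alpha0 p (n:ℝ)) atTop
      (𝓝 (∫ s in Ioi (0:ℝ), Real.exp (-s) * s ^ (-γ))) := by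
    apply tendsto_integral_filter_of_dominated_convergence
      (bound := fun s => (2:ℝ)^γ' * (Real.exp (-s) * s^(-γ')) + Real.exp (-s))
    · exact Filter.Eventually.of_forall (fun n =>
        ((repr_meas hp hpsum (n:ℝ)).div measurable_const).aestronglyMeasurable)
    · filter_upwards [eventually_ge_atTop N] with n hn
      rw [ae_restrict_iff' measurableSet_Ioi]
      apply Filter.Eventually.of_forall
      intro s hs
      have hs0 : (0:ℝ) < s := hs
      have hαn1 : 1 ≤ alpha0 p (n:ℝ) := (hN n hn).2
      have hαnpos : (0:ℝ) < alpha0 p (n:ℝ) := lt_of_lt_of_le one_pos hαn1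
      have hnn : 0 ≤ Real.exp (-s) * alpha0 p ((n:ℝ)/s) / alpha0 p (n:ℝ) :=
        div_nonneg (mul_nonneg (Real.exp_pos _).le (alpha_nonneg p _)) hαnpos.le
      rw [Real.norm_of_nonneg hnn]
      rw [div_le_iff₀ hαnpos]
      calc Real.exp (-s) * alpha0 p ((n:ℝ)/s)
          ≤ Real.exp (-s) * (((2:ℝ)^γ' * s^(-γ') + 1) * alpha0 p (n:ℝ)) :=
            mul_le_mul_of_nonneg_left (hratio n hn s hs0) (Real.exp_pos _).le
        _ = ((2:ℝ)^γ' * (Real.exp (-s) * s^(-γ')) + Real.exp (-s)) * alpha0 p (n:ℝ) := by ring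
    · have h1 : IntegrableOn (fun s : ℝ => Real.exp (-s) * s ^ ((1 - γ') - 1)) (Ioi 0) :=
        Real.GammaIntegral_convergent (by linarith)
      have h1' : IntegrableOn (fun s : ℝ => Real.exp (-s) * s ^ (-γ')) (Ioi 0) := by
        have : (1 - γ') - 1 = -γ' := by ring
        rwa [this] at h1
      have h2 : IntegrableOn (fun s : ℝ => Real.exp (-s)) (Ioi 0) := by
        have := exp_neg_integrableOn_Ioi 0 (one_pos (α := ℝ))
        simpa using this
      exact (h1'.const_mul _).add h2
    · rw [ae_restrict_iff' measurableSet_Ioi]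
      apply Filter.Eventually.of_forall
      intro s hs
      have hs0 : (0:ℝ) < s := hs
      have heq : ∀ n : ℕ, Real.exp (-s) * alpha0 p ((n:ℝ)/s) / alpha0 p (n:ℝ) =
          Real.exp (-s) * (alpha0 p ((n:ℝ) * (1/s)) / alpha0 p (n:ℝ)) := by
        intro n
        rw [mul_div_assoc]
        congr 2
        ring
      simp_rw [heq]
      have hlim := (hRV (1/s) (by positivity)).const_mul (Real.exp (-s))
      have : (1/s) ^ γ = s ^ (-γ) := by
        rw [one_div, Real.rpow_neg hs0.le, ← Real.inv_rpow hs0.le]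
      rwa [this] at hlim
  -- identify the limit with Gamma
  have hGamma : ∫ s in Ioi (0:ℝ), Real.exp (-s) * s ^ (-γ) = Real.Gamma (1 - γ) := by
    rw [Real.Gamma_eq_integral (by linarith)]
    congr 1
    ext s
    congr 1
    ring_nf
  rw [hGamma] at hDCT
  -- identify the integrals with the sums
  apply hDCT.congr'
  filter_upwards [alpha_one_le hp hpsum, eventually_ge_atTop 1] with n hα1 hn1
  have hnpos : (0:ℝ) < (n:ℝ) := by exact_mod_cast hn1
  rw [MeasureTheory.integral_div, integral_repr hp hpsum hnpos]

/-- Lemma (Karlin): `α(n)⁻¹ ∑_j Var(1_{M_{n,j} ≥ 1}) = α(n)⁻¹ ∑_j e^{-n p_j}(1 - e^{-n p_j})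
→ (2^γ - 1) Γ(1-γ)`, for independent `M_{n,j} ∼ Poisson(n p_j)`. -/
theorem poisson_occupancy_variance
    (p : ℕ → ℝ) (hp : ∀ j, 0 < p j) (hpsum : HasSum p 1)
    (γ : ℝ) (hγ : γ ∈ Set.Ioo (0 : ℝ) 1)
    (hRV : RegularlyVarying (alpha0 p) γ) :
    Tendsto
      (fun n : ℕ =>
        (∑' j : ℕ, Real.exp (-((n : ℝ) * p j)) * (1 - Real.exp (-((n : ℝ) * p j)))) / alpha0 p n)
      atTop (𝓝 (((2 : ℝ) ^ γ - 1) * Real.Gamma (1 - γ))) := by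
  have hS : Summable p := hpsum.summable
  have hmain := main_limit hp hS hγ hRV
  -- limit along 2n
  have h2atTop : Tendsto (fun n : ℕ => 2 * n) atTop atTop :=
    Filter.tendsto_atTop_atTop.mpr (fun b => ⟨b, fun a ha => by omega⟩)
  have h2n : Tendsto (fun n : ℕ => (∑' j, (1 - Real.exp (-(((2*n : ℕ):ℝ) * p j)))) /
      alpha0 p ((2*n : ℕ) : ℝ)) atTop (𝓝 (Real.Gamma (1 - γ))) := hmain.comp h2atTop
  -- ratio limit
  have hrat : Tendsto (fun n : ℕ => alpha0 p ((2*n : ℕ) : ℝ) / alpha0 p (n:ℝ)) atTop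
      (𝓝 ((2:ℝ) ^ γ)) := by
    have := hRV 2 two_pos
    apply this.congr
    intro n
    congr 2
    push_cast
    ring
  have h1le2n : ∀ᶠ n : ℕ in atTop, 1 ≤ alpha0 p ((2*n : ℕ) : ℝ) :=
    h2atTop.eventually (alpha_one_le hp hS)
  have hcomb := (h2n.mul hrat).sub hmain
  have hconst : Real.Gamma (1-γ) * (2:ℝ)^γ - Real.Gamma (1-γ) =
      ((2:ℝ)^γ - 1) * Real.Gamma (1-γ) := by ring
  rw [hconst] at hcomb
  apply hcomb.congr'
  filter_upwards [alpha_one_le hp hS, h1le2n] with n h1 h2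
  have hα : alpha0 p (n:ℝ) ≠ 0 := by linarith
  have hα2 : alpha0 p ((2*n : ℕ):ℝ) ≠ 0 := by linarith
  have hterm : ∀ j, Real.exp (-((n:ℝ) * p j)) * (1 - Real.exp (-((n:ℝ) * p j))) =
      (1 - Real.exp (-(((2*n : ℕ):ℝ) * p j))) - (1 - Real.exp (-((n:ℝ) * p j))) := by
    intro j
    have : -(((2*n : ℕ):ℝ) * p j) = -((n:ℝ) * p j) + -((n:ℝ) * p j) := by push_cast; ring
    rw [this, Real.exp_add]
    ring
  have hsum2 : Summable (fun j => 1 - Real.exp (-(((2*n : ℕ):ℝ) * p j))) :=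
    summ_one_sub hp hS (Nat.cast_nonneg _)
  have hsum1 : Summable (fun j => 1 - Real.exp (-((n:ℝ) * p j))) :=
    summ_one_sub hp hS (Nat.cast_nonneg _)
  have hts : (∑' j : ℕ, Real.exp (-((n:ℝ) * p j)) * (1 - Real.exp (-((n:ℝ) * p j)))) =
      (∑' j, (1 - Real.exp (-(((2*n : ℕ):ℝ) * p j)))) -
      (∑' j, (1 - Real.exp (-((n:ℝ) * p j)))) := by
    rw [← Summable.tsum_sub hsum2 hsum1]
    exact tsum_congr hterm
  show (∑' j, (1 - Real.exp (-(((2*n : ℕ):ℝ) * p j)))) / alpha0 p ((2*n : ℕ):ℝ) *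
      (alpha0 p ((2*n : ℕ):ℝ) / alpha0 p (n:ℝ)) -
      (∑' j, (1 - Real.exp (-((n:ℝ) * p j)))) / alpha0 p (n:ℝ) = _
  have hkey : ∀ (a b c : ℝ), b ≠ 0 → a / b * (b / c) = a / c := fun a b c hb => by
    field_simp
  rw [hkey _ _ _ hα2, ← sub_div, ← hts]

end
end

section
/- Suppose that $V_{k,n}$, for $k,n\in\mathbb{N}$, are random variables, independent of random variables $N_n\sim\mathrm{Poisson}(n)$, such that $a_n(V_{N_n,n}-E_n)$ converges in distribution to $N(0,\tau^2)$ and such that $a_n(V_{k_n,n}-V_{n,n})\to 0$ in probability for every sequence $k_n$ with $|k_n-n|=O(\sqrt n)$, as $n\to\infty$, for given real numbers $a_n$ and $E_n$. Then $a_n(V_{n,n}-E_n)$ converges in distribution to $N(0,\tau^2)$. -/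
open MeasureTheory ProbabilityTheory Filter Topology Real Set BoundedContinuousFunction
open scoped NNReal ENNReal

noncomputable section

/-- Convergence in distribution: the laws of `X n` under `μ` converge weakly to `ν`. -/
def TendstoInDist {Ω : Type*} [MeasurableSpace Ω] (μ : Measure Ω)
    (X : ℕ → Ω → ℝ) (ν : Measure ℝ) : Prop :=
  ∀ f : ℝ →ᵇ ℝ, Tendsto (fun n => ∫ ω, f (X n ω) ∂μ) atTop (𝓝 (∫ x, f x ∂ν))

/-- Convergence in probability to a deterministic sequence of centers. -/
def TendstoInProbTo {Ω : Type*} [MeasurableSpace Ω] (μ : Measure Ω)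
    (X : ℕ → Ω → ℝ) (c : ℕ → ℝ) : Prop :=
  ∀ ε : ℝ, 0 < ε → Tendsto (fun n => μ {ω | ε ≤ |X n ω - c n|}) atTop (𝓝 0)

/-- De-Poissonization lemma: if `a_n (V_{N_n,n} - E_n) ⇝ N(0, τ²)` for Poisson variables
`N_n ∼ Poisson(n)` independent of the `V_{k,n}`, and `a_n (V_{k_n,n} - V_{n,n}) → 0` in
probability whenever `|k_n - n| = O(√n)`, then `a_n (V_{n,n} - E_n) ⇝ N(0, τ²)`.

The Poisson pmf with real parameter `n`. -/
def ppmf (n : ℕ) (j : ℕ) : ℝ := Real.exp (-(n : ℝ)) * (n : ℝ) ^ j / (Nat.factorial j : ℝ)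

lemma ppmf_nonneg (n j : ℕ) : 0 ≤ ppmf n j := by
  unfold ppmf; positivity

lemma ppmf_hasSum_one (n : ℕ) : HasSum (ppmf n) 1 := by
  have h := ProbabilityTheory.poissonPMFRealSum (n : ℝ≥0)
  have : (fun j => ProbabilityTheory.poissonPMFReal (n : ℝ≥0) j) = ppmf n := by
    funext j
    simp [ProbabilityTheory.poissonPMFReal, ppmf]
  rw [← this]; exact h

lemma ppmf_succ (n j : ℕ) : ((j : ℝ) + 1) * ppmf n (j + 1) = (n : ℝ) * ppmf n j := by
  unfold ppmf
  have hj : (Nat.factorial j : ℝ) ≠ 0 := Nat.cast_ne_zero.mpr (Nat.factorial_ne_zero j)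
  rw [Nat.factorial_succ, pow_succ]
  push_cast
  field_simp

lemma ppmf_hasSum_mean (n : ℕ) : HasSum (fun j : ℕ => (j : ℝ) * ppmf n j) n := by
  have h1 : HasSum (fun j : ℕ => ((j : ℝ) + 1) * ppmf n (j + 1)) ((n : ℝ) * 1) := by
    simpa [ppmf_succ] using (ppmf_hasSum_one n).mul_left (n : ℝ)
  have h2 : HasSum (fun j => ((j + 1 : ℕ) : ℝ) * ppmf n (j + 1)) (n : ℝ) := by
    simpa using h1
  have := (hasSum_nat_add_iff (f := fun j : ℕ => (j : ℝ) * ppmf n j) 1).mp h2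
  simpa using this

lemma ppmf_hasSum_fact2 (n : ℕ) :
    HasSum (fun j : ℕ => (j : ℝ) * ((j : ℝ) - 1) * ppmf n j) ((n : ℝ) ^ 2) := by
  have key : ∀ j : ℕ, ((j + 2 : ℕ) : ℝ) * (((j + 2 : ℕ) : ℝ) - 1) * ppmf n (j + 2)
      = (n : ℝ) ^ 2 * ppmf n j := by
    intro j
    have e1 : ((j : ℝ) + 2) * ppmf n (j + 2) = (n : ℝ) * ppmf n (j + 1) := by
      have := ppmf_succ n (j + 1)
      push_cast at this ⊢
      linarith [this]
    have e2 : ((j : ℝ) + 1) * ppmf n (j + 1) = (n : ℝ) * ppmf n j := ppmf_succ n j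
    push_cast
    have : ((j:ℝ) + 2) * (((j:ℝ) + 2) - 1) * ppmf n (j + 2)
        = ((j:ℝ) + 1) * (((j:ℝ)+2) * ppmf n (j+2)) := by ring
    rw [this, e1, mul_comm ((j:ℝ)+1) ((n:ℝ) * ppmf n (j+1)), mul_assoc,
      mul_comm (ppmf n (j+1)) ((j:ℝ)+1), e2]
    ring
  have h1 : HasSum (fun j => ((j + 2 : ℕ) : ℝ) * (((j + 2 : ℕ) : ℝ) - 1) * ppmf n (j + 2))
      ((n : ℝ) ^ 2 * 1) := by
    simp only [key]
    exact (ppmf_hasSum_one n).mul_left _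
  have := (hasSum_nat_add_iff (f := fun j : ℕ => (j : ℝ) * ((j : ℝ) - 1) * ppmf n j) 2).mp
    (by simpa using h1)
  simpa [Finset.sum_range_succ] using this

lemma ppmf_hasSum_var (n : ℕ) :
    HasSum (fun j : ℕ => ((j : ℝ) - n) ^ 2 * ppmf n j) n := by
  have h0 := (ppmf_hasSum_one n).mul_left ((n : ℝ) ^ 2)
  have h1 := (ppmf_hasSum_mean n).mul_left (1 - 2 * (n : ℝ))
  have h2 := ppmf_hasSum_fact2 n
  have h := (h2.add h1).add h0
  have e : (fun j : ℕ => ((j : ℝ) * ((j : ℝ) - 1) * ppmf n j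
      + (1 - 2 * (n : ℝ)) * ((j : ℝ) * ppmf n j)) + (n : ℝ) ^ 2 * ppmf n j)
      = fun j : ℕ => ((j : ℝ) - n) ^ 2 * ppmf n j := by
    funext j; ring
  rw [e] at h
  have : (n : ℝ) ^ 2 + (1 - 2 * (n : ℝ)) * (n : ℝ) + (n : ℝ) ^ 2 * 1 = (n : ℝ) := by ring
  rwa [this] at h

lemma ppmf_tail_le (n : ℕ) (hn : 1 ≤ n) (C : ℝ) (hC : 0 < C) :
    ∑' j : ℕ, Set.indicator {j : ℕ | C * Real.sqrt n < |(j : ℝ) - n|} (ppmf n) j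
      ≤ 1 / C ^ 2 := by
  set T : Set ℕ := {j : ℕ | C * Real.sqrt n < |(j : ℝ) - n|}
  have hnpos : (0 : ℝ) < n := by exact_mod_cast hn
  have hbound : ∀ j : ℕ, Set.indicator T (ppmf n) j
      ≤ (((j : ℝ) - n) ^ 2 / (C ^ 2 * n)) * ppmf n j := by
    intro j
    by_cases hj : j ∈ T
    · rw [Set.indicator_of_mem hj]
      have h1 : C * Real.sqrt n < |(j : ℝ) - n| := hj
      have h2 : (C * Real.sqrt n) ^ 2 ≤ ((j : ℝ) - n) ^ 2 := by
        have := sq_le_sq' (by nlinarith [abs_nonneg ((j:ℝ) - n), Real.sqrt_nonneg (n:ℝ)]) h1.le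
        calc (C * Real.sqrt n) ^ 2 ≤ |(j : ℝ) - n| ^ 2 := by
              apply sq_le_sq' _ h1.le
              nlinarith [Real.sqrt_nonneg (n:ℝ), abs_nonneg ((j:ℝ) - n)]
          _ = ((j : ℝ) - n) ^ 2 := sq_abs _
      have h3 : C ^ 2 * n ≤ ((j : ℝ) - n) ^ 2 := by
        rw [mul_pow, Real.sq_sqrt hnpos.le] at h2; exact h2
      have h4 : (1 : ℝ) ≤ ((j : ℝ) - n) ^ 2 / (C ^ 2 * n) := by
        rw [le_div_iff₀ (by positivity)]; linarith
      nlinarith [ppmf_nonneg n j]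
    · rw [Set.indicator_of_notMem hj]
      have := ppmf_nonneg n j
      positivity
  have hsum : Summable (fun j : ℕ => (((j : ℝ) - n) ^ 2 / (C ^ 2 * n)) * ppmf n j) := by
    have := ((ppmf_hasSum_var n).summable).mul_left (1 / (C ^ 2 * n))
    convert this using 2 with j
    · rfl
    · ring
  have hsum' : HasSum (fun j : ℕ => (((j : ℝ) - n) ^ 2 / (C ^ 2 * n)) * ppmf n j)
      ((1 / (C ^ 2 * n)) * n) := by
    have := (ppmf_hasSum_var n).mul_left (1 / (C ^ 2 * n))
    convert this using 2 with j
    · rfl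
    · ring
  have hind : Summable (Set.indicator T (ppmf n)) := by
    apply Summable.of_nonneg_of_le _ hbound hsum
    intro j
    exact Set.indicator_nonneg (fun i _ => ppmf_nonneg n i) j
  calc ∑' j : ℕ, Set.indicator T (ppmf n) j
      ≤ ∑' j : ℕ, (((j : ℝ) - n) ^ 2 / (C ^ 2 * n)) * ppmf n j :=
        Summable.tsum_le_tsum hbound hind hsum
    _ = (1 / (C ^ 2 * n)) * n := hsum'.tsum_eq
    _ = 1 / C ^ 2 := by field_simp
    
lemma ppmf_tail_summable (n : ℕ) (T : Set ℕ) : Summable (Set.indicator T (ppmf n)) := by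
  apply Summable.of_nonneg_of_le _ _ (ppmf_hasSum_one n).summable
  · intro j; exact Set.indicator_nonneg (fun i _ => ppmf_nonneg n i) j
  · intro j; exact Set.indicator_le_self' (fun i _ => ppmf_nonneg n i) j

lemma tail_measure {Ω : Type*} [MeasurableSpace Ω] (μ : Measure Ω)
    (N : Ω → ℕ) (hN : Measurable N) (n : ℕ)
    (hp : ∀ k, μ {ω | N ω = k} = ENNReal.ofReal (ppmf n k))
    (T : Set ℕ) :
    μ {ω | N ω ∈ T} = ENNReal.ofReal (∑' j : ℕ, Set.indicator T (ppmf n) j) := by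
  have hset : {ω | N ω ∈ T} = ⋃ j : T, N ⁻¹' {(j : ℕ)} := by
    ext ω; simp [Set.mem_iUnion]
  rw [hset, measure_iUnion]
  · have h1 : ∀ j : T, μ (N ⁻¹' {(j : ℕ)}) = ENNReal.ofReal (ppmf n j) := fun j => hp j
    calc ∑' j : T, μ (N ⁻¹' {(j : ℕ)}) = ∑' j : T, ENNReal.ofReal (ppmf n j) := by
          simp_rw [h1]
      _ = ∑' j : ℕ, Set.indicator T (fun i => ENNReal.ofReal (ppmf n i)) j := by
          exact (tsum_subtype T (fun i => ENNReal.ofReal (ppmf n i)))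
      _ = ∑' j : ℕ, ENNReal.ofReal (Set.indicator T (ppmf n) j) := by
          congr 1; funext j
          by_cases hj : j ∈ T <;> simp [hj]
      _ = ENNReal.ofReal (∑' j : ℕ, Set.indicator T (ppmf n) j) := by
          rw [ENNReal.ofReal_tsum_of_nonneg
            (fun j => Set.indicator_nonneg (fun i _ => ppmf_nonneg n i) j)
            (ppmf_tail_summable n T)]
  · intro i j hij
    simp only [Set.disjoint_left]
    intro ω hi hj
    apply hij
    have : (i : ℕ) = (j : ℕ) := by
      simp only [Set.mem_preimage, Set.mem_singleton_iff] at hi hj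
      rw [← hi, ← hj]
    exact Subtype.ext this
  · exact fun j => hN (measurableSet_singleton _)

lemma total_measure {Ω : Type*} [MeasurableSpace Ω] (μ : Measure Ω)
    (N : Ω → ℕ) (hN : Measurable N) (n : ℕ)
    (hp : ∀ k, μ {ω | N ω = k} = ENNReal.ofReal (ppmf n k)) :
    ∑' j : ℕ, μ {ω | N ω = j} = 1 := by
  simp_rw [hp]
  rw [← ENNReal.ofReal_tsum_of_nonneg (fun j => ppmf_nonneg n j) (ppmf_hasSum_one n).summable,
    (ppmf_hasSum_one n).tsum_eq, ENNReal.ofReal_one]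

lemma integrable_bcf_comp {Ω : Type*} [MeasurableSpace Ω] (μ : Measure Ω)
    [IsProbabilityMeasure μ] (f : ℝ →ᵇ ℝ) (X : Ω → ℝ) (hX : Measurable X) :
    Integrable (fun ω => f (X ω)) μ := by
  refine ⟨(f.continuous.measurable.comp hX).aestronglyMeasurable, ?_⟩
  apply MeasureTheory.HasFiniteIntegral.of_bounded (C := ‖f‖)
  filter_upwards with ω
  exact f.norm_coe_le_norm _

lemma slutsky {Ω : Type*} [MeasurableSpace Ω] (μ : Measure Ω) [IsProbabilityMeasure μ]
    (X Z : ℕ → Ω → ℝ) (hX : ∀ n, Measurable (X n)) (hZ : ∀ n, Measurable (Z n))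
    (ν : Measure ℝ) [IsProbabilityMeasure ν]
    (hZν : ∀ f : ℝ →ᵇ ℝ, Tendsto (fun n => ∫ ω, f (Z n ω) ∂μ) atTop (𝓝 (∫ x, f x ∂ν)))
    (hXZ : ∀ ε : ℝ, 0 < ε → Tendsto (fun n => μ {ω | ε ≤ |Z n ω - X n ω|}) atTop (𝓝 0)) :
    ∀ f : ℝ →ᵇ ℝ, Tendsto (fun n => ∫ ω, f (X n ω) ∂μ) atTop (𝓝 (∫ x, f x ∂ν)) := by
  intro f
  rw [Metric.tendsto_atTop]
  intro ε hε
  set B : ℝ := ‖f‖ with hB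
  have hB0 : 0 ≤ B := norm_nonneg f
  set ε' : ℝ := ε / (8 * (B + 1)) with hε'
  have hε'0 : 0 < ε' := by positivity
  -- Step 1: choose M with ν {x | M ≤ |x|} small
  obtain ⟨M, hM⟩ : ∃ M : ℕ, (ν {x : ℝ | (M : ℝ) ≤ |x|}).toReal < ε' := by
    have hmeas : ∀ i : ℕ, MeasurableSet {x : ℝ | (i : ℝ) ≤ |x|} :=
      fun i => measurableSet_le measurable_const (measurable_id.abs)
    have hanti : Antitone (fun i : ℕ => {x : ℝ | (i : ℝ) ≤ |x|}) := by
      intro i j hij x hx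
      simp only [Set.mem_setOf_eq] at hx ⊢
      exact le_trans (by exact_mod_cast hij) hx
    have hempty : ⋂ i : ℕ, {x : ℝ | (i : ℝ) ≤ |x|} = ∅ := by
      ext x
      simp only [Set.mem_iInter, Set.mem_setOf_eq, Set.mem_empty_iff_false, iff_false, not_forall]
      obtain ⟨i, hi⟩ := exists_nat_gt |x|
      exact ⟨i, not_le.mpr hi⟩
    have htend := MeasureTheory.tendsto_measure_iInter_atTop
      (fun i => (hmeas i).nullMeasurableSet) hanti ⟨0, measure_ne_top ν _⟩
    rw [hempty, measure_empty] at htend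
    have hev := htend.eventually_lt_const (by positivity : (0:ℝ≥0∞) < ENNReal.ofReal ε')
    obtain ⟨M, hM⟩ := hev.exists
    exact ⟨M, ENNReal.toReal_lt_of_lt_ofReal hM⟩
  -- Step 2: bump function
  set gfun : ℝ → ℝ := fun x => min 1 (max 0 (|x| - M)) with hgfun
  have hgcont : Continuous gfun := by
    apply Continuous.min continuous_const
    exact Continuous.max continuous_const (continuous_abs.sub continuous_const)
  have hg_nonneg : ∀ x, 0 ≤ gfun x := fun x => le_min zero_le_one (le_max_left _ _)
  have hg_le_one : ∀ x, gfun x ≤ 1 := fun x => min_le_left _ _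
  set G : ℝ →ᵇ ℝ := BoundedContinuousFunction.mkOfBound ⟨gfun, hgcont⟩ 1
    (fun x y => by
      show dist (gfun x) (gfun y) ≤ 1
      rw [Real.dist_eq, abs_sub_le_iff]
      constructor <;> [skip; skip] <;>
        · have := hg_nonneg x; have := hg_nonneg y
          have := hg_le_one x; have := hg_le_one y
          linarith) with hG
  have hGapp : ∀ x, G x = gfun x := fun x => rfl
  -- ∫ G dν < ε'
  have hGν : ∫ x, G x ∂ν < ε' := by
    have hle : ∀ x, G x ≤ Set.indicator {x : ℝ | (M : ℝ) ≤ |x|} (fun _ => (1:ℝ)) x := by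
      intro x
      by_cases hx : x ∈ {x : ℝ | (M : ℝ) ≤ |x|}
      · rw [Set.indicator_of_mem hx]; exact hg_le_one x
      · rw [Set.indicator_of_notMem hx]
        rw [hGapp]
        have hx' : ¬ ((M : ℝ) ≤ |x|) := hx
        have h0 : |x| - M ≤ 0 := by linarith [not_le.mp hx']
        simp only [hgfun]
        rw [max_eq_left h0]
        simp
      
    have hmeasM : MeasurableSet {x : ℝ | (M : ℝ) ≤ |x|} :=
      measurableSet_le measurable_const measurable_id.abs
    have h1 : ∫ x, G x ∂ν ≤ ∫ x, Set.indicator {x : ℝ | (M : ℝ) ≤ |x|} (fun _ => (1:ℝ)) x ∂ν := by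
      apply integral_mono (G.integrable ν) ((integrable_const (1:ℝ)).indicator hmeasM) hle
    rw [MeasureTheory.integral_indicator_const (1:ℝ) hmeasM] at h1
    simp only [smul_eq_mul, mul_one] at h1
    exact lt_of_le_of_lt h1 hM
  -- Step 3: eventually ∫ G(Z n) < 2 ε'
  have hev1 : ∀ᶠ n in atTop, ∫ ω, G (Z n ω) ∂μ < 2 * ε' :=
    (hZν G).eventually_lt_const (by linarith)
  -- Step 4: uniform continuity on compact
  obtain ⟨δ0, hδ0, hδprop⟩ : ∃ δ0 > 0, ∀ x ∈ Set.Icc (-(M:ℝ) - 2) ((M:ℝ) + 2),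
      ∀ y ∈ Set.Icc (-(M:ℝ) - 2) ((M:ℝ) + 2), dist x y < δ0 → dist (f x) (f y) < ε' := by
    have := (isCompact_Icc (a := -(M:ℝ) - 2) (b := (M:ℝ) + 2)).uniformContinuousOn_of_continuous
      f.continuous.continuousOn
    exact Metric.uniformContinuousOn_iff.mp this ε' hε'0
  set δ : ℝ := min δ0 1 with hδdef
  have hδpos : 0 < δ := lt_min hδ0 one_pos
  -- Step 5: eventually μ {δ ≤ |Z - X|} small
  have hev2 : ∀ᶠ n in atTop, (μ {ω | δ ≤ |Z n ω - X n ω|}).toReal < ε' := by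
    have := (hXZ δ hδpos).eventually_lt_const
      (by positivity : (0:ℝ≥0∞) < ENNReal.ofReal ε')
    filter_upwards [this] with n hn
    exact ENNReal.toReal_lt_of_lt_ofReal hn
  have hev3 : ∀ᶠ n in atTop, dist (∫ ω, f (Z n ω) ∂μ) (∫ x, f x ∂ν) < ε' :=
    Metric.tendsto_nhds.mp (hZν f) ε' hε'0
  -- Step 6: conclude
  rw [← Filter.eventually_atTop]
  filter_upwards [hev1, hev2, hev3] with n h1 h2 h3
  -- measurable sets
  set A : Set Ω := {ω | (M : ℝ) + 1 ≤ |Z n ω|} with hA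
  set Bs : Set Ω := {ω | δ ≤ |Z n ω - X n ω|} with hBs
  have hAmeas : MeasurableSet A := measurableSet_le measurable_const (hZ n).abs
  have hBmeas : MeasurableSet Bs :=
    measurableSet_le measurable_const ((hZ n).sub (hX n)).abs
  set bad : Set Ω := A ∪ Bs with hbad
  have hbadmeas : MeasurableSet bad := hAmeas.union hBmeas
  -- μ A bounded by ∫ G (Z n)
  have hAbound : (μ A).toReal ≤ ∫ ω, G (Z n ω) ∂μ := by
    have hle : ∀ ω, Set.indicator A (fun _ => (1:ℝ)) ω ≤ G (Z n ω) := by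
      intro ω
      by_cases hω : ω ∈ A
      · rw [Set.indicator_of_mem hω, hGapp]
        have hω' : (M : ℝ) + 1 ≤ |Z n ω| := hω
        simp only [hgfun]
        rw [max_eq_right (by linarith), min_eq_left (by linarith)]
      · rw [Set.indicator_of_notMem hω]
        exact hg_nonneg _
    have := integral_mono ((integrable_const (1:ℝ)).indicator hAmeas)
      (integrable_bcf_comp μ G (Z n) (hZ n)) hle
    rwa [MeasureTheory.integral_indicator_const (1:ℝ) hAmeas, smul_eq_mul, mul_one] at this
  have hμA : (μ A).toReal < 2 * ε' := lt_of_le_of_lt hAbound h1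
  -- pointwise bound
  have hpt : ∀ ω, |f (X n ω) - f (Z n ω)| ≤ ε' + Set.indicator bad (fun _ => 2 * B) ω := by
    intro ω
    by_cases hω : ω ∈ bad
    · rw [Set.indicator_of_mem hω]
      have h4 := f.norm_coe_le_norm (X n ω)
      have h5 := f.norm_coe_le_norm (Z n ω)
      rw [Real.norm_eq_abs] at h4 h5
      have := abs_sub (f (X n ω)) (f (Z n ω))
      calc |f (X n ω) - f (Z n ω)| ≤ |f (X n ω)| + |f (Z n ω)| := abs_sub _ _
        _ ≤ ε' + 2 * B := by linarith
    · rw [Set.indicator_of_notMem hω]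
      simp only [hbad, Set.mem_union, not_or, hA, hBs, Set.mem_setOf_eq, not_le] at hω
      obtain ⟨hω1, hω2⟩ := hω
      have h6 := abs_lt.mp hω1
      have hZK : Z n ω ∈ Set.Icc (-(M:ℝ) - 2) ((M:ℝ) + 2) := by
        rw [Set.mem_Icc]; constructor <;> linarith [h6.1, h6.2]
      have hXZd : |X n ω - Z n ω| < δ := by rw [abs_sub_comm]; exact hω2
      have h7 := abs_lt.mp hXZd
      have hδ1 : δ ≤ 1 := min_le_right _ _
      have hXK : X n ω ∈ Set.Icc (-(M:ℝ) - 2) ((M:ℝ) + 2) := by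
        rw [Set.mem_Icc]; constructor <;> linarith [h6.1, h6.2, h7.1, h7.2]
      have hfd := hδprop _ hXK _ hZK
        (by rw [Real.dist_eq]; exact lt_of_lt_of_le hXZd (min_le_left _ _))
      rw [Real.dist_eq] at hfd
      linarith
  -- integral bound
  have hint1 : Integrable (fun ω => f (X n ω)) μ := integrable_bcf_comp μ f (X n) (hX n)
  have hint2 : Integrable (fun ω => f (Z n ω)) μ := integrable_bcf_comp μ f (Z n) (hZ n)
  have hdiff : |(∫ ω, f (X n ω) ∂μ) - ∫ ω, f (Z n ω) ∂μ| ≤ ε' + 2 * B * (μ bad).toReal := by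
    rw [← integral_sub hint1 hint2]
    calc |∫ ω, (f (X n ω) - f (Z n ω)) ∂μ| = ‖∫ ω, (f (X n ω) - f (Z n ω)) ∂μ‖ :=
        (Real.norm_eq_abs _).symm
      _ ≤ ∫ ω, ‖f (X n ω) - f (Z n ω)‖ ∂μ := norm_integral_le_integral_norm _
      _ = ∫ ω, |f (X n ω) - f (Z n ω)| ∂μ := by simp [Real.norm_eq_abs]
      _ ≤ ∫ ω, (ε' + Set.indicator bad (fun _ => 2 * B) ω) ∂μ :=
        integral_mono (hint1.sub hint2).abs
          ((integrable_const ε').add ((integrable_const (2 * B)).indicator hbadmeas)) hpt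
      _ = ε' + 2 * B * (μ bad).toReal := by
        rw [integral_add (integrable_const _) ((integrable_const _).indicator hbadmeas),
          integral_const, MeasureTheory.integral_indicator_const _ hbadmeas]
        simp [mul_comm]
        exact Or.inl rfl
  have hbadμ : (μ bad).toReal ≤ (μ A).toReal + (μ Bs).toReal := by
    have hle := measure_union_le (μ := μ) A Bs
    calc (μ bad).toReal ≤ ((μ A) + (μ Bs)).toReal :=
        ENNReal.toReal_mono (ENNReal.add_ne_top.mpr ⟨measure_ne_top μ A, measure_ne_top μ Bs⟩) hle
      _ = (μ A).toReal + (μ Bs).toReal :=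
        ENNReal.toReal_add (measure_ne_top μ A) (measure_ne_top μ Bs)
  have hkey : ε' * (8 * (B + 1)) = ε := by
    rw [hε']; field_simp
  have htri : dist (∫ ω, f (X n ω) ∂μ) (∫ x, f x ∂ν)
      ≤ |(∫ ω, f (X n ω) ∂μ) - ∫ ω, f (Z n ω) ∂μ| + dist (∫ ω, f (Z n ω) ∂μ) (∫ x, f x ∂ν) := by
    rw [← Real.dist_eq]
    exact dist_triangle _ _ _
  nlinarith [h2, h3, hμA, hbadμ, hdiff, htri, hε'0, hB0, ENNReal.toReal_nonneg (a := μ Bs)]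

/-- De-Poissonization lemma: if `a_n (V_{N_n,n} - E_n) ⇝ N(0, τ²)` for Poisson variables
`N_n ∼ Poisson(n)` independent of the `V_{k,n}`, and `a_n (V_{k_n,n} - V_{n,n}) → 0` in
probability whenever `|k_n - n| = O(√n)`, then `a_n (V_{n,n} - E_n) ⇝ N(0, τ²)`. -/
theorem dePoissonization
    {Ω : Type*} [MeasurableSpace Ω] (μ : Measure Ω) [IsProbabilityMeasure μ]
    (V : ℕ → ℕ → Ω → ℝ) (hVmeas : ∀ k n, Measurable (V k n))
    (N : ℕ → Ω → ℕ) (hNmeas : ∀ n, Measurable (N n))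
    (hNpois : ∀ n k : ℕ,
      μ {ω | N n ω = k} =
        ENNReal.ofReal (Real.exp (-(n : ℝ)) * (n : ℝ) ^ k / (Nat.factorial k : ℝ)))
    (hNindep : ∀ n : ℕ, IndepFun (fun ω => (fun k => V k n ω : ℕ → ℝ)) (N n) μ)
    (a E : ℕ → ℝ) (τ : ℝ)
    (h1 : TendstoInDist μ (fun n ω => a n * (V (N n ω) n ω - E n))
      (gaussianReal 0 (Real.toNNReal (τ ^ 2))))
    (h2 : ∀ k : ℕ → ℕ, (∃ C : ℝ, ∀ n : ℕ, |(k n : ℝ) - (n : ℝ)| ≤ C * Real.sqrt (n : ℝ)) →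
      TendstoInProbTo μ (fun n ω => a n * (V (k n) n ω - V n n ω)) (fun _ => 0)) :
    TendstoInDist μ (fun n ω => a n * (V n n ω - E n))
      (gaussianReal 0 (Real.toNNReal (τ ^ 2))) := by
  -- measurability of the Poissonized variable
  have hZVmeas : ∀ n, Measurable (fun ω => V (N n ω) n ω) := by
    intro n
    have hW : Measurable (fun ω => (fun i => V i n ω : ℕ → ℝ)) :=
      measurable_pi_lambda _ (fun i => hVmeas i n)
    have heval : Measurable (fun p : (ℕ → ℝ) × ℕ => p.1 p.2) :=
      measurable_from_prod_countable_left (fun j => measurable_pi_apply j)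
    exact heval.comp (hW.prodMk (hNmeas n))
  have hppmf : ∀ n k, μ {ω | N n ω = k} = ENNReal.ofReal (ppmf n k) := by
    intro n k; rw [hNpois n k]; rfl
  -- convergence in probability of the difference
  have hXZ : ∀ ε : ℝ, 0 < ε → Tendsto
      (fun n => μ {ω | ε ≤ |a n * (V (N n ω) n ω - V n n ω)|}) atTop (𝓝 0) := by
    intro ε hε
    rw [ENNReal.tendsto_nhds_zero]
    intro ε0 hε0
    obtain ⟨r, hr0, hrle⟩ : ∃ r : ℝ, 0 < r ∧ ENNReal.ofReal r ≤ ε0 := by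
      rcases eq_or_ne ε0 ⊤ with h | h
      · exact ⟨1, one_pos, h ▸ le_top⟩
      · exact ⟨ε0.toReal, ENNReal.toReal_pos hε0.ne' h, (ENNReal.ofReal_toReal h).le⟩
    -- choose C
    set C : ℝ := max 1 (Real.sqrt (2 / r)) with hC
    have hC1 : (1 : ℝ) ≤ C := le_max_left _ _
    have hC0 : (0 : ℝ) < C := lt_of_lt_of_le one_pos hC1
    have hCr : 1 / C ^ 2 ≤ r / 2 := by
      have h2r : (0 : ℝ) ≤ 2 / r := by positivity
      have hCs : Real.sqrt (2 / r) ≤ C := le_max_right _ _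
      have hC2 : 2 / r ≤ C ^ 2 := by
        calc 2 / r = Real.sqrt (2 / r) ^ 2 := (Real.sq_sqrt h2r).symm
          _ ≤ C ^ 2 := by
            apply sq_le_sq' _ hCs
            have := Real.sqrt_nonneg (2 / r)
            linarith
      rw [div_le_div_iff₀ (by positivity) two_pos]
      have := mul_le_mul_of_nonneg_left hC2 hr0.le
      rw [mul_div_cancel₀ 2 hr0.ne'] at this
      nlinarith
    -- the measure of the bad event, per index
    set m : ℕ → ℕ → ℝ≥0∞ := fun n j => μ {ω | ε ≤ |a n * (V j n ω - V n n ω)|} with hm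
    -- argmax sequence
    have hex : ∀ n : ℕ, ∃ j : ℕ, |(j : ℝ) - n| ≤ C * Real.sqrt n ∧
        ∀ i : ℕ, |(i : ℝ) - n| ≤ C * Real.sqrt n → m n i ≤ m n j := by
      intro n
      set F : Finset ℕ := (Finset.range (n + 1 + ⌈C * Real.sqrt n⌉₊)).filter
        (fun j => |(j : ℝ) - n| ≤ C * Real.sqrt n) with hF
      have hnF : n ∈ F := by
        rw [hF, Finset.mem_filter, Finset.mem_range]
        constructor
        · omega
        · simp only [sub_self, abs_zero]
          positivity
      obtain ⟨j, hjF, hjmax⟩ := F.exists_max_image (m n) ⟨n, hnF⟩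
      refine ⟨j, (Finset.mem_filter.mp hjF).2, ?_⟩
      intro i hi
      apply hjmax
      rw [hF, Finset.mem_filter, Finset.mem_range]
      refine ⟨?_, hi⟩
      have h1 : (i : ℝ) - n ≤ C * Real.sqrt n := (abs_le.mp hi).2
      have h2 : (i : ℝ) ≤ (n : ℝ) + ⌈C * Real.sqrt n⌉₊ := by
        have := Nat.le_ceil (C * Real.sqrt n)
        linarith
      have h3 : i ≤ n + ⌈C * Real.sqrt n⌉₊ := by exact_mod_cast h2
      omega
    choose k hk1 hk2 using hex
    -- convergence along the argmax sequence
    have hkm : Tendsto (fun n => m n (k n)) atTop (𝓝 0) := by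
      have := h2 k ⟨C, hk1⟩ ε hε
      simpa only [sub_zero] using this
    have hev1 : ∀ᶠ n in atTop, m n (k n) ≤ ENNReal.ofReal (r / 2) := by
      exact hkm.eventually_le_const (ENNReal.ofReal_pos.mpr (by positivity))
    have hev2 : ∀ᶠ n : ℕ in atTop, 1 ≤ n := eventually_ge_atTop 1
    filter_upwards [hev1, hev2] with n hn1 hn2
    -- the main bound for fixed n
    set T : Set ℕ := {j : ℕ | C * Real.sqrt n < |(j : ℝ) - n|} with hT
    set A : ℕ → Set Ω := fun j => {ω | ε ≤ |a n * (V j n ω - V n n ω)|} with hA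
    set p : ℕ → ℝ≥0∞ := fun j => μ {ω | N n ω = j} with hp
    have hWmeas : Measurable (fun ω => (fun i => V i n ω : ℕ → ℝ)) :=
      measurable_pi_lambda _ (fun i => hVmeas i n)
    -- decomposition
    have hdecomp : {ω | ε ≤ |a n * (V (N n ω) n ω - V n n ω)|}
        = ⋃ j : ℕ, (A j ∩ {ω | N n ω = j}) := by
      ext ω
      simp only [Set.mem_iUnion, Set.mem_inter_iff, Set.mem_setOf_eq, hA]
      constructor
      · intro h
        exact ⟨N n ω, h, rfl⟩
      · rintro ⟨j, hj, hNj⟩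
        rw [hNj]
        exact hj
    have hindep : ∀ j : ℕ, μ (A j ∩ {ω | N n ω = j}) = m n j * p j := by
      intro j
      set Sj : Set (ℕ → ℝ) := {v : ℕ → ℝ | ε ≤ |a n * (v j - v n)|} with hSj
      have hSjmeas : MeasurableSet Sj := by
        have h1 : Measurable (fun v : ℕ → ℝ => a n * (v j - v n)) := by
          fun_prop
        exact measurableSet_le measurable_const h1.abs
      have heq : A j ∩ {ω | N n ω = j}
          = (fun ω => (fun i => V i n ω : ℕ → ℝ)) ⁻¹' Sj ∩ (N n) ⁻¹' {j} := rfl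
      rw [heq, (hNindep n).measure_inter_preimage_eq_mul Sj {j} hSjmeas
        (measurableSet_singleton j)]
      rfl
    have hAle : ∀ j : ℕ, m n j * p j
        ≤ m n (k n) * p j + Set.indicator T (fun i => p i) j := by
      intro j
      by_cases hj : j ∈ T
      · rw [Set.indicator_of_mem hj]
        calc m n j * p j ≤ 1 * p j :=
            mul_le_mul_left prob_le_one _
          _ = p j := one_mul _
          _ ≤ m n (k n) * p j + p j := le_add_self
      · rw [Set.indicator_of_notMem hj, add_zero]
        have hj' : |(j : ℝ) - n| ≤ C * Real.sqrt n := not_lt.mp hj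
        exact mul_le_mul_left (hk2 n j hj') _
    calc μ {ω | ε ≤ |a n * (V (N n ω) n ω - V n n ω)|}
        = μ (⋃ j : ℕ, (A j ∩ {ω | N n ω = j})) := by rw [hdecomp]
      _ ≤ ∑' j : ℕ, μ (A j ∩ {ω | N n ω = j}) := measure_iUnion_le _
      _ = ∑' j : ℕ, m n j * p j := by simp_rw [hindep]
      _ ≤ ∑' j : ℕ, (m n (k n) * p j + Set.indicator T (fun i => p i) j) :=
          ENNReal.tsum_le_tsum hAle
      _ = m n (k n) * (∑' j : ℕ, p j) + ∑' j : ℕ, Set.indicator T (fun i => p i) j := by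
          rw [ENNReal.tsum_add, ENNReal.tsum_mul_left]
      _ ≤ ENNReal.ofReal (r / 2) + ENNReal.ofReal (r / 2) := by
          apply add_le_add
          · rw [hp, total_measure μ (N n) (hNmeas n) n (hppmf n), mul_one]
            exact hn1
          · have e : ∀ j, Set.indicator T (fun i => p i) j
                = ENNReal.ofReal (Set.indicator T (ppmf n) j) := by
              intro j
              by_cases hj : j ∈ T
              · rw [Set.indicator_of_mem hj, Set.indicator_of_mem hj]
                exact hppmf n j
              · rw [Set.indicator_of_notMem hj, Set.indicator_of_notMem hj,
                  ENNReal.ofReal_zero]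
            calc ∑' j : ℕ, Set.indicator T (fun i => p i) j
                = ∑' j : ℕ, ENNReal.ofReal (Set.indicator T (ppmf n) j) := by
                  exact tsum_congr e
              _ = ENNReal.ofReal (∑' j : ℕ, Set.indicator T (ppmf n) j) :=
                  (ENNReal.ofReal_tsum_of_nonneg
                    (fun j => Set.indicator_nonneg (fun i _ => ppmf_nonneg n i) j)
                    (ppmf_tail_summable n T)).symm
              _ ≤ ENNReal.ofReal (r / 2) :=
                  ENNReal.ofReal_le_ofReal (le_trans (ppmf_tail_le n hn2 C hC0) hCr)
      _ = ENNReal.ofReal r := by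
          rw [← ENNReal.ofReal_add (by positivity) (by positivity)]
          norm_num
      _ ≤ ε0 := hrle
  -- apply Slutsky
  intro f
  have hX : ∀ n, Measurable (fun ω => a n * (V n n ω - E n)) :=
    fun n => ((hVmeas n n).sub measurable_const).const_mul _
  have hZ : ∀ n, Measurable (fun ω => a n * (V (N n ω) n ω - E n)) :=
    fun n => ((hZVmeas n).sub measurable_const).const_mul _
  have hXZ' : ∀ ε : ℝ, 0 < ε → Tendsto (fun n => μ {ω | ε ≤
      |(a n * (V (N n ω) n ω - E n)) - (a n * (V n n ω - E n))|}) atTop (𝓝 0) := by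
    intro ε hε
    have : ∀ n : ℕ, {ω | ε ≤ |(a n * (V (N n ω) n ω - E n)) - (a n * (V n n ω - E n))|}
        = {ω | ε ≤ |a n * (V (N n ω) n ω - V n n ω)|} := by
      intro n; ext ω
      simp only [Set.mem_setOf_eq]
      rw [show (a n * (V (N n ω) n ω - E n)) - (a n * (V n n ω - E n))
        = a n * (V (N n ω) n ω - V n n ω) by ring]
    simp_rw [this]
    exact hXZ ε hε
  exact slutsky μ (fun n ω => a n * (V n n ω - E n)) (fun n ω => a n * (V (N n ω) n ω - E n))
    hX hZ _ h1 hXZ' f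

end
end
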